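/- arXiv:math/0603502 — 7 statements merged into one kernel-verified Lean document; each statement's English description precedes it below -/
import Mathlib

section
/- Let H be a complex Hilbert space, J : H → H a unitary operator with J* = −J, and L ⊆ H a closed Lagrangian subspace (L^⊥ = J(L)). Then the restriction of the orthogonal projection Π_i := ½(I − iJ) to L is a continuous linear bijection from L onto the eigenspace H_i = ker(J − i·I), and likewise the restriction of Π_{−i} := ½(I + iJ) to L is a continuous linear bijection from L onto H_{−i} = ker(J + i·I). -/
/-- The orthogonal projection `Π_i = ½(I − iJ)` onto the `i`-eigenspace of `J`. -/
noncomputable def PiP {H : Type*} [NormedAddCommGroup H] [InnerProductSpace ℂ H]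
    (J : H →L[ℂ] H) : H →L[ℂ] H := (2 : ℂ)⁻¹ • (1 - Complex.I • J)

/-- The orthogonal projection `Π_{−i} = ½(I + iJ)` onto the `−i`-eigenspace of `J`. -/
noncomputable def PiM {H : Type*} [NormedAddCommGroup H] [InnerProductSpace ℂ H]
    (J : H →L[ℂ] H) : H →L[ℂ] H := (2 : ℂ)⁻¹ • (1 + Complex.I • J)

/-- For `J` unitary with `J* = −J` and `L` a closed Lagrangian subspace
(`Lᗮ = J(L)`), the (continuous, linear) projections `Π_{±i} = ½(I ∓ iJ)`
restrict to bijections from `L` onto the eigenspaces `H_{±i} = ker(J ∓ i·I)`. -/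
theorem stmt5 {H : Type*} [NormedAddCommGroup H] [InnerProductSpace ℂ H] [CompleteSpace H]
    (J : H →L[ℂ] H)
    (hJunitary : (ContinuousLinearMap.adjoint J).comp J = 1 ∧
      J.comp (ContinuousLinearMap.adjoint J) = 1)
    (hJskew : ContinuousLinearMap.adjoint J = -J)
    (L : Submodule ℂ H) (hL : IsClosed (L : Set H))
    (hLag : Lᗮ = L.map (J : H →ₗ[ℂ] H)) :
    Continuous (⇑(PiP J)) ∧ Continuous (⇑(PiM J)) ∧
    Set.BijOn (⇑(PiP J)) (L : Set H)
      ((LinearMap.ker ((J - Complex.I • (1 : H →L[ℂ] H) : H →L[ℂ] H) : H →ₗ[ℂ] H) : Submodule ℂ H) : Set H) ∧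
    Set.BijOn (⇑(PiM J)) (L : Set H)
      ((LinearMap.ker ((J + Complex.I • (1 : H →L[ℂ] H) : H →L[ℂ] H) : H →ₗ[ℂ] H) : Submodule ℂ H) : Set H) := by
  -- J² = -1
  have hJJ : ∀ x, J (J x) = -x := by
    intro x
    have h := DFunLike.congr_fun hJunitary.1 x
    rw [hJskew] at h
    simp only [ContinuousLinearMap.comp_apply, ContinuousLinearMap.neg_apply,
      ContinuousLinearMap.one_apply] at h
    exact neg_eq_iff_eq_neg.mp h
  have hI2 : ∀ v : H, Complex.I • Complex.I • v = -v := by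
    intro v; rw [smul_smul, Complex.I_mul_I, neg_one_smul]
  have hJinj : ∀ x, J x = 0 → x = 0 := by
    intro x hx
    have h := hJJ x
    rw [hx, map_zero] at h
    simpa using h.symm
  -- key: x ∈ L with J x ∈ L forces x = 0
  have hA : ∀ x ∈ L, J x ∈ L → x = 0 := by
    intro x hx hJx
    have hJxo : J x ∈ Lᗮ := by
      rw [hLag]; exact Submodule.mem_map_of_mem hx
    have h0 : J x = 0 :=
      inner_self_eq_zero.mp ((Submodule.mem_orthogonal L (J x)).mp hJxo (J x) hJx)
    exact hJinj x h0
  -- pointwise formulas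
  have hPiP : ∀ x, PiP J x = (2:ℂ)⁻¹ • (x - Complex.I • J x) := by
    intro x; simp [PiP, smul_sub]
  have hPiM : ∀ x, PiM J x = (2:ℂ)⁻¹ • (x + Complex.I • J x) := by
    intro x; simp [PiM, smul_add]
  -- intertwining identities
  have hPJ : ∀ z, PiP J (J z) = Complex.I • PiP J z := by
    intro z
    rw [hPiP, hPiP, hJJ z, smul_neg, sub_neg_eq_add, smul_comm Complex.I, smul_sub, hI2,
      sub_neg_eq_add, add_comm (Complex.I • z)]
  have hMJ : ∀ z, PiM J (J z) = -(Complex.I • PiM J z) := by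
    intro z
    rw [hPiM, hPiM, hJJ z, smul_neg, ← sub_eq_add_neg, smul_comm Complex.I, smul_add, hI2,
      ← sub_eq_add_neg, ← smul_neg, neg_sub]
  -- J commutes with the projections
  have hcP : ∀ x, J (PiP J x) = PiP J (J x) := by
    intro x; rw [hPiP, hPiP, map_smul, map_sub, map_smul]
  have hcM : ∀ x, J (PiM J x) = PiM J (J x) := by
    intro x; rw [hPiM, hPiM, map_smul, map_add, map_smul]
  -- eigenspace membership after projection
  have hmemP : ∀ x, PiP J x ∈ LinearMap.ker ((J - Complex.I • (1 : H →L[ℂ] H) : H →L[ℂ] H) : H →ₗ[ℂ] H) := by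
    intro x
    rw [LinearMap.mem_ker]
    simp only [ContinuousLinearMap.coe_coe, ContinuousLinearMap.sub_apply, ContinuousLinearMap.smul_apply,
      ContinuousLinearMap.one_apply]
    rw [hcP, hPJ, sub_self]
  have hmemM : ∀ x, PiM J x ∈ LinearMap.ker ((J + Complex.I • (1 : H →L[ℂ] H) : H →L[ℂ] H) : H →ₗ[ℂ] H) := by
    intro x
    rw [LinearMap.mem_ker]
    simp only [ContinuousLinearMap.coe_coe, ContinuousLinearMap.add_apply, ContinuousLinearMap.smul_apply,
      ContinuousLinearMap.one_apply]
    rw [hcM, hMJ, neg_add_cancel]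
  -- fixed points on the eigenspaces
  have hfixP : ∀ y, J y = Complex.I • y → PiP J y = y := by
    intro y hy
    rw [hPiP, hy, hI2, sub_neg_eq_add, ← two_smul ℂ y, smul_smul]
    norm_num
  have hfixM : ∀ y, J y = -(Complex.I • y) → PiM J y = y := by
    intro y hy
    rw [hPiM, hy, smul_neg, hI2, neg_neg, ← two_smul ℂ y, smul_smul]
    norm_num
  -- kernel descriptions
  have hkerP : ∀ y, y ∈ LinearMap.ker ((J - Complex.I • (1 : H →L[ℂ] H) : H →L[ℂ] H) : H →ₗ[ℂ] H) ↔
      J y = Complex.I • y := by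
    intro y
    rw [LinearMap.mem_ker]
    simp only [ContinuousLinearMap.coe_coe, ContinuousLinearMap.sub_apply, ContinuousLinearMap.smul_apply,
      ContinuousLinearMap.one_apply, sub_eq_zero]
  have hkerM : ∀ y, y ∈ LinearMap.ker ((J + Complex.I • (1 : H →L[ℂ] H) : H →L[ℂ] H) : H →ₗ[ℂ] H) ↔
      J y = -(Complex.I • y) := by
    intro y
    rw [LinearMap.mem_ker]
    simp only [ContinuousLinearMap.coe_coe, ContinuousLinearMap.add_apply, ContinuousLinearMap.smul_apply,
      ContinuousLinearMap.one_apply, add_eq_zero_iff_eq_neg]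
  haveI : CompleteSpace L := hL.completeSpace_coe
  refine ⟨(PiP J).continuous, (PiM J).continuous, ⟨?_, ?_, ?_⟩, ⟨?_, ?_, ?_⟩⟩
  · -- MapsTo for PiP
    intro x _
    exact hmemP x
  · -- InjOn for PiP
    intro x hx y hy hxy
    have hd0 : PiP J (x - y) = 0 := by rw [map_sub, hxy, sub_self]
    rw [hPiP] at hd0
    have h2 : (x - y) - Complex.I • J (x - y) = 0 := by
      rcases smul_eq_zero.mp hd0 with h | h
      · norm_num at h
      · exact h
    have hdI : x - y = Complex.I • J (x - y) := by rwa [sub_eq_zero] at h2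
    have hJd : J (x - y) = -(Complex.I • (x - y)) := by
      have h3 : Complex.I • (x - y) = -(J (x - y)) := by
        conv_lhs => rw [hdI]
        rw [hI2]
      exact neg_eq_iff_eq_neg.mp h3.symm
    have hdL : x - y ∈ L := Submodule.sub_mem L hx hy
    have hJdL : J (x - y) ∈ L := by
      rw [hJd]; exact Submodule.neg_mem _ (Submodule.smul_mem _ _ hdL)
    exact sub_eq_zero.mp (hA _ hdL hJdL)
  · -- SurjOn for PiP
    intro y hy
    rw [SetLike.mem_coe, hkerP] at hy
    have hbo : y - (L.orthogonalProjectionOnto y : H) ∈ Lᗮ :=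
      Submodule.sub_starProjection_mem_orthogonal (K := L) y
    rw [hLag] at hbo
    obtain ⟨c, hcL, hc⟩ := hbo
    refine ⟨(L.orthogonalProjectionOnto y : H) + Complex.I • c, ?_, ?_⟩
    · exact Submodule.add_mem L (Submodule.coe_mem _) (Submodule.smul_mem L _ hcL)
    · rw [map_add, map_smul, ← hPJ]
      have hc' : J c = y - (L.orthogonalProjectionOnto y : H) := hc
      rw [hc', ← map_add,
        show (L.orthogonalProjectionOnto y : H) + (y - (L.orthogonalProjectionOnto y : H)) = y from by
          abel]
      exact hfixP y hy
  · -- MapsTo for PiM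
    intro x _
    exact hmemM x
  · -- InjOn for PiM
    intro x hx y hy hxy
    have hd0 : PiM J (x - y) = 0 := by rw [map_sub, hxy, sub_self]
    rw [hPiM] at hd0
    have h2 : (x - y) + Complex.I • J (x - y) = 0 := by
      rcases smul_eq_zero.mp hd0 with h | h
      · norm_num at h
      · exact h
    have hdI : x - y = -(Complex.I • J (x - y)) := by
      rwa [add_eq_zero_iff_eq_neg] at h2
    have hJd : J (x - y) = Complex.I • (x - y) := by
      have h3 : Complex.I • (x - y) = J (x - y) := by
        conv_lhs => rw [hdI]
        rw [smul_neg, hI2, neg_neg]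
      exact h3.symm
    have hdL : x - y ∈ L := Submodule.sub_mem L hx hy
    have hJdL : J (x - y) ∈ L := by
      rw [hJd]; exact Submodule.smul_mem _ _ hdL
    exact sub_eq_zero.mp (hA _ hdL hJdL)
  · -- SurjOn for PiM
    intro y hy
    rw [SetLike.mem_coe, hkerM] at hy
    have hbo : y - (L.orthogonalProjectionOnto y : H) ∈ Lᗮ :=
      Submodule.sub_starProjection_mem_orthogonal (K := L) y
    rw [hLag] at hbo
    obtain ⟨c, hcL, hc⟩ := hbo
    refine ⟨(L.orthogonalProjectionOnto y : H) - Complex.I • c, ?_, ?_⟩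
    · exact Submodule.sub_mem L (Submodule.coe_mem _) (Submodule.smul_mem L _ hcL)
    · have hc' : J c = y - (L.orthogonalProjectionOnto y : H) := hc
      rw [map_sub, map_smul,
        show Complex.I • PiM J c = -(PiM J (J c)) from by rw [hMJ, neg_neg],
        sub_neg_eq_add, ← map_add, hc',
        show (L.orthogonalProjectionOnto y : H) + (y - (L.orthogonalProjectionOnto y : H)) = y from by
          abel]
      exact hfixM y hy
end

section
/- Let H be a complex Hilbert space, J : H → H a unitary operator with J* = −J, and L ⊆ H a closed Lagrangian subspace (L^⊥ = J(L)). Then the operator Φ(L) := Π_{−i} ∘ (Π_i|_L)^{−1}, defined using the bijection Π_i|_L : L → H_i, is a well-defined unitary operator (a surjective linear isometry) from H_i = ker(J − i·I) onto H_{−i} = ker(J + i·I). -/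
open scoped ComplexInnerProductSpace


/-- The `i`-eigenspace `H_i = ker(J − i·I)` of `J`. -/
noncomputable def eigP {H : Type*} [NormedAddCommGroup H] [InnerProductSpace ℂ H]
    (J : H →L[ℂ] H) : Submodule ℂ H := LinearMap.ker ((J - Complex.I • (1 : H →L[ℂ] H) : H →L[ℂ] H) : H →ₗ[ℂ] H)

/-- The `−i`-eigenspace `H_{−i} = ker(J + i·I)` of `J`. -/
noncomputable def eigM {H : Type*} [NormedAddCommGroup H] [InnerProductSpace ℂ H]
    (J : H →L[ℂ] H) : Submodule ℂ H := LinearMap.ker ((J + Complex.I • (1 : H →L[ℂ] H) : H →L[ℂ] H) : H →ₗ[ℂ] H)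

/-- For `J` unitary with `J* = −J` and `L` a closed Lagrangian subspace
(`Lᗮ = J(L)`), the operator `Φ(L) := Π_{−i} ∘ (Π_i|_L)⁻¹` is a well-defined
unitary (surjective linear isometry) from `H_i` onto `H_{−i}`; it is characterized
by `Φ(Π_i u) = Π_{−i} u` for all `u ∈ L`. -/
theorem stmt6 {H : Type*} [NormedAddCommGroup H] [InnerProductSpace ℂ H] [CompleteSpace H]
    (J : H →L[ℂ] H)
    (hJunitary : (ContinuousLinearMap.adjoint J).comp J = 1 ∧
      J.comp (ContinuousLinearMap.adjoint J) = 1)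
    (hJskew : ContinuousLinearMap.adjoint J = -J)
    (L : Submodule ℂ H) (hL : IsClosed (L : Set H))
    (hLag : Lᗮ = L.map (J : H →ₗ[ℂ] H)) :
    ∃ Φ : (eigP J) ≃ₗᵢ[ℂ] (eigM J),
      ∀ u ∈ L, ∀ h : PiP J u ∈ eigP J, (Φ ⟨PiP J u, h⟩ : H) = PiM J u := by
  obtain ⟨hJ1, _⟩ := hJunitary
  rw [hJskew] at hJ1
  -- J ∘ J = -1
  have hJJ : ∀ x : H, J (J x) = -x := by
    intro x
    have h := congrArg (fun T : H →L[ℂ] H => T x) hJ1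
    simp only [ContinuousLinearMap.comp_apply, ContinuousLinearMap.neg_apply,
      ContinuousLinearMap.one_apply] at h
    exact neg_eq_iff_eq_neg.mp h
  -- J preserves inner products
  have hinner : ∀ x y : H, ⟪J x, J y⟫ = ⟪x, y⟫ := by
    intro x y
    have h : ContinuousLinearMap.adjoint J (J y) = y := by
      rw [hJskew]
      simpa using congrArg (fun T : H →L[ℂ] H => T y) hJ1
    rw [← h, ContinuousLinearMap.adjoint_inner_right, h]
  have hPiP_apply : ∀ x : H, PiP J x = (2:ℂ)⁻¹ • (x - Complex.I • J x) := by
    intro x; simp [PiP]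
  have hPiM_apply : ∀ x : H, PiM J x = (2:ℂ)⁻¹ • (x + Complex.I • J x) := by
    intro x; simp [PiM]
  have hmemP' : ∀ x : H, x ∈ eigP J ↔ J x = Complex.I • x := by
    intro x
    simp [eigP, LinearMap.mem_ker, ContinuousLinearMap.sub_apply,
      ContinuousLinearMap.smul_apply, ContinuousLinearMap.one_apply, sub_eq_zero]
  have hmemM' : ∀ x : H, x ∈ eigM J ↔ J x = -(Complex.I • x) := by
    intro x
    simp [eigM, LinearMap.mem_ker, ContinuousLinearMap.add_apply,
      ContinuousLinearMap.smul_apply, ContinuousLinearMap.one_apply, add_eq_zero_iff_eq_neg]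
  have hmemP : ∀ x : H, PiP J x ∈ eigP J := by
    intro x
    rw [hmemP', hPiP_apply, map_smul, map_sub, map_smul, hJJ]
    match_scalars <;> (ring_nf; try simp [Complex.I_sq]) <;> try ring
  have hmemM : ∀ x : H, PiM J x ∈ eigM J := by
    intro x
    rw [hmemM', hPiM_apply, map_smul, map_add, map_smul, hJJ]
    match_scalars <;> (ring_nf; try simp [Complex.I_sq]) <;> try ring
  -- inner products on L
  have horth : ∀ x ∈ L, ⟪x, J x⟫ = 0 ∧ ⟪J x, x⟫ = 0 := by
    intro x hx
    have hJx : J x ∈ Lᗮ := by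
      rw [hLag]; exact ⟨x, hx, rfl⟩
    have h1 : ⟪x, J x⟫ = 0 := (Submodule.mem_orthogonal L (J x)).mp hJx x hx
    exact ⟨h1, by rw [← inner_conj_symm, h1, map_zero]⟩
  have hIP : ∀ x ∈ L, ⟪PiP J x, PiP J x⟫ = (2:ℂ)⁻¹ * ⟪x, x⟫ := by
    intro x hx
    obtain ⟨h1, h2⟩ := horth x hx
    rw [hPiP_apply]
    simp only [inner_smul_left, inner_smul_right, inner_sub_left, inner_sub_right,
      hinner, h1, h2, Complex.conj_I, map_inv₀, Complex.conj_ofNat]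
    ring_nf
    rw [Complex.I_sq]
    ring
  have hIM : ∀ x ∈ L, ⟪PiM J x, PiM J x⟫ = (2:ℂ)⁻¹ * ⟪x, x⟫ := by
    intro x hx
    obtain ⟨h1, h2⟩ := horth x hx
    rw [hPiM_apply]
    simp only [inner_smul_left, inner_smul_right, inner_add_left, inner_add_right,
      hinner, h1, h2, Complex.conj_I, map_inv₀, Complex.conj_ofNat]
    ring_nf
    rw [Complex.I_sq]
    ring
  have hinjP : ∀ x ∈ L, PiP J x = 0 → x = 0 := by
    intro x hx h
    have := hIP x hx
    rw [h, inner_zero_left] at this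
    have hxx : ⟪x, x⟫ = 0 := by
      field_simp at this
      simpa using this.symm
    exact inner_self_eq_zero.mp hxx
  have hinjM : ∀ x ∈ L, PiM J x = 0 → x = 0 := by
    intro x hx h
    have := hIM x hx
    rw [h, inner_zero_left] at this
    have hxx : ⟪x, x⟫ = 0 := by
      field_simp at this
      simpa using this.symm
    exact inner_self_eq_zero.mp hxx
  have hnorm : ∀ x ∈ L, ‖PiM J x‖ = ‖PiP J x‖ := by
    intro x hx
    rw [@norm_eq_sqrt_re_inner ℂ, @norm_eq_sqrt_re_inner ℂ, hIP x hx, hIM x hx]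
  -- commutation
  have hPJ : ∀ w : H, PiP J (J w) = Complex.I • PiP J w := by
    intro w
    rw [hPiP_apply, hPiP_apply, hJJ]
    match_scalars <;> (ring_nf; try simp [Complex.I_sq]) <;> try ring
  have hMJ : ∀ w : H, PiM J (J w) = -(Complex.I • PiM J w) := by
    intro w
    rw [hPiM_apply, hPiM_apply, hJJ]
    match_scalars <;> (ring_nf; try simp [Complex.I_sq]) <;> try ring
  have hPfix : ∀ y ∈ eigP J, PiP J y = y := by
    intro y hy
    rw [hmemP'] at hy
    rw [hPiP_apply, hy, smul_smul, Complex.I_mul_I]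
    module
  have hMfix : ∀ y ∈ eigM J, PiM J y = y := by
    intro y hy
    rw [hmemM'] at hy
    rw [hPiM_apply, hy, smul_neg, smul_smul, Complex.I_mul_I]
    module
  -- the restricted maps
  let fL : L →ₗ[ℂ] eigP J :=
    LinearMap.codRestrict (eigP J) (((PiP J : H →ₗ[ℂ] H)).comp L.subtype)
      (fun x => hmemP x)
  let gL : L →ₗ[ℂ] eigM J :=
    LinearMap.codRestrict (eigM J) (((PiM J : H →ₗ[ℂ] H)).comp L.subtype)
      (fun x => hmemM x)
  have hfL : ∀ x : L, (fL x : H) = PiP J x := fun x => rfl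
  have hgL : ∀ x : L, (gL x : H) = PiM J x := fun x => rfl
  haveI : CompleteSpace L := hL.completeSpace_coe
  have hfbij : Function.Bijective fL := by
    constructor
    · intro x y hxy
      have h : PiP J ((x : H) - y) = 0 := by
        rw [map_sub, sub_eq_zero]
        exact congrArg Subtype.val hxy
      have := hinjP ((x : H) - y) (L.sub_mem x.2 y.2) h
      exact Subtype.ext (sub_eq_zero.mp this)
    · rintro ⟨y, hy⟩
      obtain ⟨x, hx, z, hz, hyxz⟩ := Submodule.exists_add_mem_mem_orthogonal (K := L) y
      rw [hLag] at hz
      obtain ⟨w, hw, rfl⟩ := hz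
      simp only [ContinuousLinearMap.coe_coe] at hyxz
      refine ⟨⟨x + Complex.I • w, L.add_mem hx (L.smul_mem _ hw)⟩, ?_⟩
      apply Subtype.ext
      rw [hfL]
      show PiP J (x + Complex.I • w) = y
      rw [map_add, map_smul, ← hPJ, ← map_add, ← hyxz]
      exact hPfix y hy
  have hgbij : Function.Bijective gL := by
    constructor
    · intro x y hxy
      have h : PiM J ((x : H) - y) = 0 := by
        rw [map_sub, sub_eq_zero]
        exact congrArg Subtype.val hxy
      have := hinjM ((x : H) - y) (L.sub_mem x.2 y.2) h
      exact Subtype.ext (sub_eq_zero.mp this)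
    · rintro ⟨y, hy⟩
      obtain ⟨x, hx, z, hz, hyxz⟩ := Submodule.exists_add_mem_mem_orthogonal (K := L) y
      rw [hLag] at hz
      obtain ⟨w, hw, rfl⟩ := hz
      simp only [ContinuousLinearMap.coe_coe] at hyxz
      refine ⟨⟨x - Complex.I • w, L.sub_mem hx (L.smul_mem _ hw)⟩, ?_⟩
      apply Subtype.ext
      rw [hgL]
      show PiM J (x - Complex.I • w) = y
      have : PiM J (J w) = PiM J (-(Complex.I • w)) := by
        rw [map_neg, map_smul, hMJ]
      rw [sub_eq_add_neg, map_add, ← this, ← map_add, ← hyxz]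
      exact hMfix y hy
  let e : L ≃ₗ[ℂ] eigP J := LinearEquiv.ofBijective fL hfbij
  let e' : L ≃ₗ[ℂ] eigM J := LinearEquiv.ofBijective gL hgbij
  let Φlin : eigP J ≃ₗ[ℂ] eigM J := e.symm.trans e'
  have hΦnorm : ∀ y : eigP J, ‖Φlin y‖ = ‖y‖ := by
    intro y
    have hy : fL (e.symm y) = y := e.apply_symm_apply y
    have h1 : ‖Φlin y‖ = ‖PiM J (e.symm y : H)‖ := by
      show ‖(gL (e.symm y) : H)‖ = _
      rw [hgL]
    have h2 : ‖y‖ = ‖PiP J (e.symm y : H)‖ := by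
      conv_lhs => rw [← hy]
      show ‖(fL (e.symm y) : H)‖ = _
      rw [hfL]
    rw [h1, h2]
    exact hnorm _ (e.symm y).2
  refine ⟨⟨Φlin, hΦnorm⟩, ?_⟩
  intro u hu h
  have key : (⟨PiP J u, h⟩ : eigP J) = e ⟨u, hu⟩ := by
    apply Subtype.ext
    exact (hfL ⟨u, hu⟩).symm
  show (Φlin ⟨PiP J u, h⟩ : H) = PiM J u
  rw [key]
  show (e' (e.symm (e ⟨u, hu⟩)) : H) = PiM J u
  rw [e.symm_apply_apply]
  exact hgL ⟨u, hu⟩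
end

section
/- Let H be a complex Hilbert space, J : H → H a unitary operator with J* = −J, L ⊆ H a closed Lagrangian subspace (L^⊥ = J(L)) with orthogonal projection P, and Φ := Φ(L) := Π_{−i} ∘ (Π_i|_L)^{−1} : H_i → H_{−i} the associated unitary. Then for every u ∈ H one has P u = ½( Π_i u + Φ*(Π_{−i} u) + Φ(Π_i u) + Π_{−i} u ), i.e. with respect to the decomposition H = H_i ⊕ H_{−i} the projection P has the block matrix ½ [[I, Φ*],[Φ, I]]; in particular Φ = 2·Π_{−i} ∘ P restricted to H_i. -/
/-- For `J` unitary with `J* = −J`, `L` closed Lagrangian with orthogonal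
projection `P`, and `Φ = Φ(L) : H_i → H_{−i}` the associated unitary
(characterized by `Φ(Π_i u) = Π_{−i} u` for `u ∈ L`; `Φ* = Φ.symm` since `Φ` is
unitary), one has `P u = ½(Π_i u + Φ*(Π_{−i} u) + Φ(Π_i u) + Π_{−i} u)` for all
`u ∈ H`, i.e. `P = ½ [[I, Φ*],[Φ, I]]` w.r.t. `H = H_i ⊕ H_{−i}`; in particular
`Φ = 2·Π_{−i} ∘ P` on `H_i`. -/
theorem stmt7 {H : Type*} [NormedAddCommGroup H] [InnerProductSpace ℂ H] [CompleteSpace H]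
    (J : H →L[ℂ] H)
    (hJunitary : (ContinuousLinearMap.adjoint J).comp J = 1 ∧
      J.comp (ContinuousLinearMap.adjoint J) = 1)
    (hJskew : ContinuousLinearMap.adjoint J = -J)
    (L : Submodule ℂ H) (hL : IsClosed (L : Set H))
    (hLag : Lᗮ = L.map (J : H →ₗ[ℂ] H))
    (P : H →L[ℂ] H)
    (hPsa : ContinuousLinearMap.adjoint P = P)
    (hPidem : P.comp P = P)
    (hPrange : LinearMap.range (P : H →ₗ[ℂ] H) = L)
    (Φ : (eigP J) ≃ₗᵢ[ℂ] (eigM J))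
    (hΦ : ∀ u ∈ L, ∀ h : PiP J u ∈ eigP J, (Φ ⟨PiP J u, h⟩ : H) = PiM J u) :
    (∀ u : H, ∀ (h1 : PiP J u ∈ eigP J) (h2 : PiM J u ∈ eigM J),
       P u = (2 : ℂ)⁻¹ • (PiP J u + (Φ.symm ⟨PiM J u, h2⟩ : H)
                + (Φ ⟨PiP J u, h1⟩ : H) + PiM J u)) ∧
    (∀ v : eigP J, (Φ v : H) = (2 : ℂ) • PiM J (P (v : H))) := by
  -- J ∘ J = -1 pointwise
  have hJJ : ∀ u : H, J (J u) = -u := by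
    intro u
    have h : ((-J).comp J) u = (1 : H →L[ℂ] H) u := by
      rw [← hJskew, hJunitary.1]
    simpa [neg_eq_iff_eq_neg] using h
  -- membership characterizations
  have hmemP : ∀ x : H, x ∈ eigP J ↔ J x = Complex.I • x := by
    intro x
    simp [eigP, LinearMap.mem_ker, ContinuousLinearMap.sub_apply,
      ContinuousLinearMap.smul_apply, ContinuousLinearMap.one_apply, sub_eq_zero]
  have hmemM : ∀ x : H, x ∈ eigM J ↔ J x = -(Complex.I • x) := by
    intro x
    simp [eigM, LinearMap.mem_ker, ContinuousLinearMap.add_apply,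
      ContinuousLinearMap.smul_apply, ContinuousLinearMap.one_apply, add_eq_zero_iff_eq_neg]
  have hJP : ∀ u : H, J (PiP J u) = Complex.I • PiP J u := by
    intro u
    simp only [PiP, ContinuousLinearMap.smul_apply, ContinuousLinearMap.sub_apply,
      ContinuousLinearMap.one_apply, map_smul, map_sub, hJJ]
    match_scalars <;> norm_num [Complex.ext_iff]
  have hJM : ∀ u : H, J (PiM J u) = -(Complex.I • PiM J u) := by
    intro u
    simp only [PiM, ContinuousLinearMap.smul_apply, ContinuousLinearMap.add_apply,
      ContinuousLinearMap.one_apply, map_smul, map_add, hJJ]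
    match_scalars <;> norm_num [Complex.ext_iff]
  have memP : ∀ u : H, PiP J u ∈ eigP J := fun u => (hmemP _).2 (hJP u)
  have memM : ∀ u : H, PiM J u ∈ eigM J := fun u => (hmemM _).2 (hJM u)
  -- action on eigenvectors
  have hPfix : ∀ x : H, x ∈ eigP J → PiP J x = x := by
    intro x hx
    rw [hmemP] at hx
    simp only [PiP, ContinuousLinearMap.smul_apply, ContinuousLinearMap.sub_apply,
      ContinuousLinearMap.one_apply, hx]
    match_scalars <;> norm_num [Complex.ext_iff]
  have hMfix : ∀ x : H, x ∈ eigM J → PiM J x = x := by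
    intro x hx
    rw [hmemM] at hx
    simp only [PiM, ContinuousLinearMap.smul_apply, ContinuousLinearMap.add_apply,
      ContinuousLinearMap.one_apply, hx]
    match_scalars <;> norm_num [Complex.ext_iff]
  have hMkill : ∀ x : H, x ∈ eigP J → PiM J x = 0 := by
    intro x hx
    rw [hmemP] at hx
    simp only [PiM, ContinuousLinearMap.smul_apply, ContinuousLinearMap.add_apply,
      ContinuousLinearMap.one_apply, hx]
    match_scalars <;> norm_num [Complex.ext_iff]
  -- Pi of J
  have hPJ : ∀ x : H, PiP J (J x) = Complex.I • PiP J x := by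
    intro x
    simp only [PiP, ContinuousLinearMap.smul_apply, ContinuousLinearMap.sub_apply,
      ContinuousLinearMap.one_apply, map_smul, hJJ]
    match_scalars <;> norm_num [Complex.ext_iff]
  have hMJ : ∀ x : H, PiM J (J x) = -(Complex.I • PiM J x) := by
    intro x
    simp only [PiM, ContinuousLinearMap.smul_apply, ContinuousLinearMap.add_apply,
      ContinuousLinearMap.one_apply, map_smul, hJJ]
    match_scalars <;> norm_num [Complex.ext_iff]
  have hsum : ∀ x : H, PiP J x + PiM J x = x := by
    intro x
    simp only [PiP, PiM, ContinuousLinearMap.smul_apply, ContinuousLinearMap.sub_apply,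
      ContinuousLinearMap.add_apply, ContinuousLinearMap.one_apply]
    match_scalars <;> norm_num [Complex.ext_iff]
  -- P facts
  have hPL : ∀ x : H, x ∈ L → P x = x := by
    intro x hx
    rw [← hPrange] at hx
    obtain ⟨y, rfl⟩ := hx
    have := congrArg (fun T : H →L[ℂ] H => T y) hPidem
    simpa using this
  have hPuL : ∀ u : H, P u ∈ L := by
    intro u; rw [← hPrange]; exact ⟨u, rfl⟩
  -- u - P u ∈ Lᗮ
  have hperp : ∀ u : H, u - P u ∈ Lᗮ := by
    intro u
    rw [Submodule.mem_orthogonal]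
    intro x hx
    rw [← hPrange] at hx
    obtain ⟨y, rfl⟩ := hx
    have h1 : (inner ℂ (P y) (u - P u) : ℂ) = inner ℂ y (P (u - P u)) := by
      rw [← ContinuousLinearMap.adjoint_inner_left, hPsa]
    have h2 : P (u - P u) = 0 := by
      have := congrArg (fun T : H →L[ℂ] H => T u) hPidem
      simp only [ContinuousLinearMap.comp_apply] at this
      simp [map_sub, this]
    rw [ContinuousLinearMap.coe_coe, h1, h2, inner_zero_right]
  -- the key decomposition lemma, stated for all u
  have main : ∀ u : H, ∀ (h1 : PiP J u ∈ eigP J) (h2 : PiM J u ∈ eigM J),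
       P u = (2 : ℂ)⁻¹ • (PiP J u + (Φ.symm ⟨PiM J u, h2⟩ : H)
                + (Φ ⟨PiP J u, h1⟩ : H) + PiM J u) := by
    intro u h1 h2
    obtain ⟨w, hwL, hJw⟩ : ∃ w ∈ L, J w = u - P u := by
      have := hperp u
      rw [hLag] at this
      obtain ⟨w, hwL, hw⟩ := this
      exact ⟨w, hwL, hw⟩
    set a := P u with ha
    have haL : a ∈ L := hPuL u
    have hu : u = a + J w := by rw [hJw]; abel
    -- decompose PiP J u and PiM J u
    have hdP : PiP J u = PiP J a + Complex.I • PiP J w := by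
      rw [hu, map_add, hPJ]
    have hdM : PiM J u = PiM J a - Complex.I • PiM J w := by
      rw [hu, map_add, hMJ]; abel
    -- subtype versions
    have keyP : (⟨PiP J u, h1⟩ : eigP J)
        = ⟨PiP J a, memP a⟩ + Complex.I • ⟨PiP J w, memP w⟩ := by
      apply Subtype.ext
      simpa using hdP
    have keyM : (⟨PiM J u, h2⟩ : eigM J)
        = ⟨PiM J a, memM a⟩ - Complex.I • ⟨PiM J w, memM w⟩ := by
      apply Subtype.ext
      simpa using hdM
    have hΦa : Φ ⟨PiP J a, memP a⟩ = ⟨PiM J a, memM a⟩ :=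
      Subtype.ext (hΦ a haL (memP a))
    have hΦw : Φ ⟨PiP J w, memP w⟩ = ⟨PiM J w, memM w⟩ :=
      Subtype.ext (hΦ w hwL (memP w))
    have hΦu : (Φ ⟨PiP J u, h1⟩ : H) = PiM J a + Complex.I • PiM J w := by
      rw [keyP, map_add, map_smul, hΦa, hΦw]
      simp
    have hΦsu : (Φ.symm ⟨PiM J u, h2⟩ : H) = PiP J a - Complex.I • PiP J w := by
      have hsa : Φ.symm ⟨PiM J a, memM a⟩ = ⟨PiP J a, memP a⟩ := by
        rw [← hΦa, LinearIsometryEquiv.symm_apply_apply]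
      have hsw : Φ.symm ⟨PiM J w, memM w⟩ = ⟨PiP J w, memP w⟩ := by
        rw [← hΦw, LinearIsometryEquiv.symm_apply_apply]
      rw [keyM, map_sub, map_smul, hsa, hsw]
      simp
    rw [hΦu, hΦsu, hdP, hdM]
    nth_rewrite 1 [← hsum a]
    module
  refine ⟨main, ?_⟩
  intro v
  have hv := v.2
  have hPv : PiP J (v : H) = (v : H) := hPfix _ hv
  have hMv : PiM J (v : H) = 0 := hMkill _ hv
  have h1 : PiP J (v : H) ∈ eigP J := memP _
  have h2 : PiM J (v : H) ∈ eigM J := memM _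
  have hmain := main (v : H) h1 h2
  have hz : (⟨PiM J (v : H), h2⟩ : eigM J) = 0 := Subtype.ext hMv
  have hvv : (⟨PiP J (v : H), h1⟩ : eigP J) = v := Subtype.ext hPv
  rw [hz, hvv, map_zero, hPv, hMv] at hmain
  simp only [ZeroMemClass.coe_zero, add_zero] at hmain
  have hΦvM : PiM J (Φ v : H) = (Φ v : H) := hMfix _ (Φ v).2
  rw [hmain, map_smul, map_add, hMv, hΦvM]
  match_scalars <;> norm_num [Complex.ext_iff]
end

section
/- Let H be a complex Hilbert space and let P, Q be orthogonal projections on H such that P − Q is a compact operator. Then the subspaces (range Q) ∩ (ker P) and (range P) ∩ (ker Q) are finite-dimensional, and the operator T : range Q → range P, T u := P u, has closed range; hence P and Q form a Fredholm pair and T is a Fredholm operator whose index is ind(P,Q) = dim(ker P ∩ range Q) − dim(range P ∩ ker Q). -/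
open Metric Filter Topology ComplexInnerProductSpace

/-- The operator `T : range Q → range P`, `T u := P u`, given by restricting `P`
to `range Q` and corestricting to `range P`. -/
noncomputable def restrictProj {H : Type*} [NormedAddCommGroup H] [InnerProductSpace ℂ H]
    (P Q : H →L[ℂ] H) : ↥(LinearMap.range (Q : H →ₗ[ℂ] H)) →ₗ[ℂ] ↥(LinearMap.range (P : H →ₗ[ℂ] H)) :=
  (LinearMap.codRestrict (LinearMap.range (P : H →ₗ[ℂ] H)) (P : H →ₗ[ℂ] H)
    (fun x => ⟨x, rfl⟩)).domRestrict (LinearMap.range (Q : H →ₗ[ℂ] H))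

/-- A closed subspace on which a compact operator acts as the identity is
finite-dimensional (Riesz). -/
lemma finDim_of_compact_fix {H : Type*} [NormedAddCommGroup H]
    [InnerProductSpace ℂ H] [CompleteSpace H] (f : H →L[ℂ] H)
    (hf : IsCompactOperator ⇑f) (V : Submodule ℂ H) (hV : IsClosed (V : Set H))
    (hfix : ∀ x ∈ V, f x = x) : FiniteDimensional ℂ V := by
  obtain ⟨K, hK, hKr⟩ := hf.image_closedBall_subset_compact (𝕜₁ := ℂ)
    (f := (f : H →ₗ[ℂ] H)) 1
  set B : Set H := (V : Set H) ∩ closedBall 0 1 with hB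
  have hBK : B ⊆ K := by
    intro x hx
    have : f x ∈ K := hKr ⟨x, hx.2, rfl⟩
    rwa [hfix x hx.1] at this
  have hBc : IsCompact B := hK.of_isClosed_subset (hV.inter isClosed_closedBall) hBK
  have hcb : IsCompact (closedBall (0 : V) 1) := by
    rw [Topology.IsEmbedding.isCompact_iff (Topology.IsEmbedding.subtypeVal)]
    have : Subtype.val '' closedBall (0 : V) 1 = B := by
      ext x
      constructor
      · rintro ⟨y, hy, rfl⟩
        exact ⟨y.2, by simpa [mem_closedBall, dist_eq_norm] using hy⟩
      · rintro ⟨hxV, hxb⟩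
        exact ⟨⟨x, hxV⟩, by simpa [mem_closedBall, dist_eq_norm] using hxb, rfl⟩
    rw [this]; exact hBc
  exact FiniteDimensional.of_isCompact_closedBall₀ ℂ one_pos hcb

/-- Semi-Fredholm lemma: if `S = ι + K` with `‖(S - K) x‖ = ‖x‖` and `K` compact,
then `S` has closed range. -/
lemma closed_range_of_compact_perturb {X H : Type*}
    [NormedAddCommGroup X] [InnerProductSpace ℂ X] [CompleteSpace X]
    [NormedAddCommGroup H] [NormedSpace ℂ H]
    (S K : X →L[ℂ] H) (hK : IsCompactOperator ⇑K)
    (hiso : ∀ x, ‖S x - K x‖ = ‖x‖) :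
    IsClosed (Set.range ⇑S) := by
  set N : Submodule ℂ X := LinearMap.ker (S : X →ₗ[ℂ] H) with hN
  have hNc : IsClosed (N : Set X) := ContinuousLinearMap.isClosed_ker S
  haveI : CompleteSpace N := hNc.completeSpace_coe
  set M : Submodule ℂ X := Nᗮ with hM
  have hMc : IsClosed (M : Set X) := N.isClosed_orthogonal
  haveI : CompleteSpace M := hMc.completeSpace_coe
  -- range S = S '' M
  have hrange : Set.range ⇑S = ⇑S '' (M : Set X) := by
    apply Set.Subset.antisymm
    · rintro _ ⟨x, rfl⟩
      obtain ⟨y, hy, z, hz, rfl⟩ := N.exists_add_mem_mem_orthogonal x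
      refine ⟨z, hz, ?_⟩
      have : S y = 0 := hy
      simp [map_add, this]
    · rintro _ ⟨x, _, rfl⟩; exact ⟨x, rfl⟩
  -- S is bounded below on M
  have hbdd : ∃ c : NNReal, 0 < c ∧ ∀ u ∈ M, (c : ℝ) * ‖u‖ ≤ ‖S u‖ := by
    by_contra hcon
    push_neg at hcon
    have hseq : ∀ n : ℕ, ∃ u : X, u ∈ M ∧ ‖u‖ = 1 ∧ ‖S u‖ < 1 / (n + 1) := by
      intro n
      obtain ⟨u, huM, hu⟩ := hcon ((n + 1 : NNReal))⁻¹ (by positivity)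
      push_cast at hu
      rw [← one_div] at hu
      have hu0 : u ≠ 0 := by
        rintro rfl
        simp only [map_zero, norm_zero, mul_zero] at hu
        exact absurd hu (lt_irrefl 0)
      have hn0 : ‖u‖ ≠ 0 := norm_ne_zero_iff.mpr hu0
      refine ⟨((‖u‖⁻¹ : ℝ) : ℂ) • u, M.smul_mem _ huM, ?_, ?_⟩
      · rw [norm_smul]
        simp only [Complex.norm_real, Real.norm_eq_abs, abs_inv, abs_norm]
        rw [inv_mul_cancel₀ hn0]
      · rw [map_smul, norm_smul]
        simp only [Complex.norm_real, Real.norm_eq_abs, abs_inv, abs_norm]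
        calc ‖u‖⁻¹ * ‖S u‖ < ‖u‖⁻¹ * (1 / ((n : ℝ) + 1) * ‖u‖) :=
              mul_lt_mul_of_pos_left hu (by positivity)
          _ = 1 / ((n : ℝ) + 1) := by
              field_simp
    choose v hvM hv1 hvS using hseq
    -- S (v n) → 0
    have hS0 : Tendsto (fun n => S (v n)) atTop (𝓝 0) := by
      rw [tendsto_iff_norm_sub_tendsto_zero]
      simp only [sub_zero]
      refine squeeze_zero (fun n => norm_nonneg _) (fun n => (hvS n).le) ?_
      exact tendsto_one_div_add_atTop_nhds_zero_nat
    -- K (v n) has a convergent subsequence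
    obtain ⟨C, hC, hCsub⟩ := hK.image_closedBall_subset_compact (𝕜₁ := ℂ)
      (f := (K : X →ₗ[ℂ] H)) 1
    have hmem : ∀ n, K (v n) ∈ C := fun n =>
      hCsub ⟨v n, by simp [mem_closedBall, dist_eq_norm, hv1 n], rfl⟩
    obtain ⟨w, -, φ, hφ, hKw⟩ := hC.tendsto_subseq hmem
    set g : ℕ → X := fun n => v (φ n) with hg
    set L : X →L[ℂ] H := S - K with hL
    have hLiso : Isometry ⇑L := AddMonoidHomClass.isometry_of_norm _ (by
      intro x; exact hiso x)
    have hSg : Tendsto (fun n => S (g n)) atTop (𝓝 0) := hS0.comp hφ.tendsto_atTop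
    have hKg : Tendsto (fun n => K (g n)) atTop (𝓝 w) := hKw
    have hLg : Tendsto (⇑L ∘ g) atTop (𝓝 (0 - w)) := by
      have := hSg.sub hKg
      exact this
    have hCg : CauchySeq g := by
      have h1 : CauchySeq (⇑L ∘ g) := hLg.cauchySeq
      unfold CauchySeq at h1 ⊢
      rw [← Filter.map_map] at h1
      exact hLiso.isUniformInducing.cauchy_map_iff.mp h1
    obtain ⟨u, hu⟩ := cauchySeq_tendsto_of_complete hCg
    have huM : u ∈ M := hMc.mem_of_tendsto hu (Eventually.of_forall fun n => hvM _)
    have hunorm : ‖u‖ = 1 := by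
      have := hu.norm
      have h2 : Tendsto (fun n => ‖g n‖) atTop (𝓝 1) := by
        simpa [hg, hv1] using tendsto_const_nhds (α := ℝ) (x := 1)
      exact tendsto_nhds_unique this h2
    have huker : u ∈ N := by
      have h3 : Tendsto (fun n => S (g n)) atTop (𝓝 (S u)) := (S.continuous.tendsto u).comp hu
      have : S u = 0 := tendsto_nhds_unique h3 hSg
      exact this
    have : u = 0 := (Submodule.disjoint_def.mp N.orthogonal_disjoint) u huker huM
    rw [this] at hunorm; simp at hunorm
  obtain ⟨c, hc0, hc⟩ := hbdd
  -- restriction of S to M is antilipschitz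
  set S' : M →L[ℂ] H := S.comp M.subtypeL with hS'
  have hanti : AntilipschitzWith c⁻¹ ⇑S' := by
    apply S'.antilipschitz_of_bound
    intro x
    have := hc x x.2
    rw [NNReal.coe_inv, le_inv_mul_iff₀ (by exact_mod_cast hc0)]
    simpa [hS'] using this
  have hclosed : IsClosed (Set.range ⇑S') :=
    hanti.isClosed_range S'.uniformContinuous
  have : Set.range ⇑S' = Set.range ⇑S := by
    rw [hrange]
    ext y
    constructor
    · rintro ⟨x, rfl⟩; exact ⟨x, x.2, rfl⟩
    · rintro ⟨x, hx, rfl⟩; exact ⟨⟨x, hx⟩, rfl⟩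
  rwa [this] at hclosed

/-- For orthogonal projections `P, Q` on a complex Hilbert space with `P − Q`
compact, the subspaces `(range Q) ∩ (ker P)` and `(range P) ∩ (ker Q)` are
finite-dimensional and the operator `T : range Q → range P`, `T u = P u`, has
closed range; hence `(P,Q)` is a Fredholm pair and `T` is Fredholm with index
`ind(P,Q) = dim(ker P ∩ range Q) − dim(range P ∩ ker Q)`. -/
theorem stmt10 {H : Type*} [NormedAddCommGroup H] [InnerProductSpace ℂ H] [CompleteSpace H]
    (P Q : H →L[ℂ] H)
    (hPsa : ContinuousLinearMap.adjoint P = P) (hPidem : P.comp P = P)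
    (hQsa : ContinuousLinearMap.adjoint Q = Q) (hQidem : Q.comp Q = Q)
    (hcpt : IsCompactOperator (⇑(P - Q))) :
    FiniteDimensional ℂ ↥(LinearMap.range (Q : H →ₗ[ℂ] H) ⊓ LinearMap.ker (P : H →ₗ[ℂ] H)) ∧
    FiniteDimensional ℂ ↥(LinearMap.range (P : H →ₗ[ℂ] H) ⊓ LinearMap.ker (Q : H →ₗ[ℂ] H)) ∧
    IsClosed ((LinearMap.range (restrictProj P Q) :
        Submodule ℂ ↥(LinearMap.range (P : H →ₗ[ℂ] H))) : Set ↥(LinearMap.range (P : H →ₗ[ℂ] H))) ∧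
    FiniteDimensional ℂ ↥(LinearMap.ker (restrictProj P Q)) ∧
    FiniteDimensional ℂ ↥((LinearMap.range (restrictProj P Q))ᗮ) ∧
    (Module.finrank ℂ ↥(LinearMap.ker (restrictProj P Q)) : ℤ)
        - (Module.finrank ℂ ↥((LinearMap.range (restrictProj P Q))ᗮ) : ℤ)
      = (Module.finrank ℂ ↥(LinearMap.ker (P : H →ₗ[ℂ] H) ⊓ LinearMap.range (Q : H →ₗ[ℂ] H)) : ℤ)
        - (Module.finrank ℂ ↥(LinearMap.range (P : H →ₗ[ℂ] H) ⊓ LinearMap.ker (Q : H →ₗ[ℂ] H)) : ℤ) := by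
  have hQfix : ∀ x ∈ LinearMap.range (Q : H →ₗ[ℂ] H), Q x = x := by
    rintro x ⟨y, rfl⟩
    exact DFunLike.congr_fun hQidem y
  have hPfix : ∀ x ∈ LinearMap.range (P : H →ₗ[ℂ] H), P x = x := by
    rintro x ⟨y, rfl⟩
    exact DFunLike.congr_fun hPidem y
  have hRQc : IsClosed ((LinearMap.range (Q : H →ₗ[ℂ] H) : Submodule ℂ H) : Set H) := by
    have : ((LinearMap.range (Q : H →ₗ[ℂ] H) : Submodule ℂ H) : Set H) = {x | Q x = x} := by
      ext x
      exact ⟨fun h => hQfix x h, fun h => ⟨x, h⟩⟩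
    rw [this]
    exact isClosed_eq Q.continuous continuous_id
  have hRPc : IsClosed ((LinearMap.range (P : H →ₗ[ℂ] H) : Submodule ℂ H) : Set H) := by
    have : ((LinearMap.range (P : H →ₗ[ℂ] H) : Submodule ℂ H) : Set H) = {x | P x = x} := by
      ext x
      exact ⟨fun h => hPfix x h, fun h => ⟨x, h⟩⟩
    rw [this]
    exact isClosed_eq P.continuous continuous_id
  have hKPc : IsClosed ((LinearMap.ker (P : H →ₗ[ℂ] H) : Submodule ℂ H) : Set H) :=
    ContinuousLinearMap.isClosed_ker P
  have hKQc : IsClosed ((LinearMap.ker (Q : H →ₗ[ℂ] H) : Submodule ℂ H) : Set H) :=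
    ContinuousLinearMap.isClosed_ker Q
  -- finite-dimensionality of the two intersections
  have hcpt' : IsCompactOperator ⇑(Q - P) := by
    have := hcpt.neg
    have he : ⇑(Q - P) = -⇑(P - Q) := by
      ext x; simp
    rwa [he]
  have fin1 : FiniteDimensional ℂ ↥(LinearMap.range (Q : H →ₗ[ℂ] H) ⊓ LinearMap.ker (P : H →ₗ[ℂ] H)) := by
    apply finDim_of_compact_fix (Q - P) hcpt'
    · rw [Submodule.coe_inf]
      exact hRQc.inter hKPc
    · rintro x ⟨hxQ, hxP⟩
      have h1 : Q x = x := hQfix x hxQ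
      have h2 : P x = 0 := hxP
      simp [h1, h2]
  have fin2 : FiniteDimensional ℂ ↥(LinearMap.range (P : H →ₗ[ℂ] H) ⊓ LinearMap.ker (Q : H →ₗ[ℂ] H)) := by
    apply finDim_of_compact_fix (P - Q) hcpt
    · rw [Submodule.coe_inf]
      exact hRPc.inter hKQc
    · rintro x ⟨hxP, hxQ⟩
      have h1 : P x = x := hPfix x hxP
      have h2 : Q x = 0 := hxQ
      simp [h1, h2]
  -- closed range
  haveI : CompleteSpace ↥(LinearMap.range (Q : H →ₗ[ℂ] H)) := hRQc.completeSpace_coe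
  set S : ↥(LinearMap.range (Q : H →ₗ[ℂ] H)) →L[ℂ] H := P.comp (LinearMap.range (Q : H →ₗ[ℂ] H)).subtypeL with hS
  set Kop : ↥(LinearMap.range (Q : H →ₗ[ℂ] H)) →L[ℂ] H := (P - Q).comp (LinearMap.range (Q : H →ₗ[ℂ] H)).subtypeL with hKop
  have hKcpt : IsCompactOperator ⇑Kop := by
    have := hcpt.comp_clm (LinearMap.range (Q : H →ₗ[ℂ] H)).subtypeL
    rwa [show ⇑(P - Q) ∘ ⇑(LinearMap.range (Q : H →ₗ[ℂ] H)).subtypeL = ⇑Kop from rfl] at this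
  have hiso : ∀ u : ↥(LinearMap.range (Q : H →ₗ[ℂ] H)), ‖S u - Kop u‖ = ‖u‖ := by
    intro u
    have h1 : S u - Kop u = Q (u : H) := by
      simp [hS, hKop]
    rw [h1, hQfix _ u.2]
    rfl
  have hSclosed : IsClosed (Set.range ⇑S) :=
    closed_range_of_compact_perturb S Kop hKcpt hiso
  have conj3 : IsClosed ((LinearMap.range (restrictProj P Q) :
      Submodule ℂ ↥(LinearMap.range (P : H →ₗ[ℂ] H))) : Set ↥(LinearMap.range (P : H →ₗ[ℂ] H))) := by
    have hset : ((LinearMap.range (restrictProj P Q) :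
        Submodule ℂ ↥(LinearMap.range (P : H →ₗ[ℂ] H))) : Set ↥(LinearMap.range (P : H →ₗ[ℂ] H)))
        = Subtype.val ⁻¹' Set.range ⇑S := by
      ext y
      simp only [SetLike.mem_coe, LinearMap.mem_range, Set.mem_preimage, Set.mem_range]
      constructor
      · rintro ⟨u, rfl⟩; exact ⟨u, rfl⟩
      · rintro ⟨u, hu⟩; exact ⟨u, Subtype.ext hu⟩
    rw [hset]
    exact hSclosed.preimage continuous_subtype_val
  -- kernel identification
  have hker : LinearMap.ker (restrictProj P Q)
      = Submodule.comap (LinearMap.range (Q : H →ₗ[ℂ] H)).subtype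
          (LinearMap.range (Q : H →ₗ[ℂ] H) ⊓ LinearMap.ker (P : H →ₗ[ℂ] H)) := by
    ext u
    simp only [LinearMap.mem_ker, Submodule.mem_comap, Submodule.mem_inf,
      Submodule.coe_subtype, LinearMap.mem_ker]
    constructor
    · intro h
      exact ⟨u.2, congrArg Subtype.val h⟩
    · intro h
      exact Subtype.ext h.2
  have e1 : ↥(LinearMap.ker (restrictProj P Q)) ≃ₗ[ℂ]
      ↥(LinearMap.range (Q : H →ₗ[ℂ] H) ⊓ LinearMap.ker (P : H →ₗ[ℂ] H)) :=
    (LinearEquiv.ofEq _ _ hker).trans (Submodule.comapSubtypeEquivOfLe inf_le_left)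
  have fin4 : FiniteDimensional ℂ ↥(LinearMap.ker (restrictProj P Q)) :=
    Module.Finite.equiv e1.symm
  have hPinner : ∀ x y : H, (⟪P x, y⟫ : ℂ) = ⟪x, P y⟫ := by
    intro x y
    nth_rewrite 1 [← hPsa]
    exact ContinuousLinearMap.adjoint_inner_left P y x
  have hQinner : ∀ x y : H, (⟪Q x, y⟫ : ℂ) = ⟪x, Q y⟫ := by
    intro x y
    nth_rewrite 1 [← hQsa]
    exact ContinuousLinearMap.adjoint_inner_left Q y x
  -- orthogonal complement identification
  have horth : (LinearMap.range (restrictProj P Q))ᗮ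
      = Submodule.comap (LinearMap.range (P : H →ₗ[ℂ] H)).subtype
          (LinearMap.range (P : H →ₗ[ℂ] H) ⊓ LinearMap.ker (Q : H →ₗ[ℂ] H)) := by
    ext v
    rw [Submodule.mem_orthogonal]
    simp only [Submodule.mem_comap, Submodule.mem_inf, Submodule.coe_subtype,
      LinearMap.mem_ker, LinearMap.mem_range]
    constructor
    · intro hv
      refine ⟨v.2, ?_⟩
      have key : ∀ x : H, ⟪x, Q (v : H)⟫ = 0 := by
        intro x
        have h1 : ⟪((restrictProj P Q ⟨Q x, ⟨x, rfl⟩⟩ : ↥(LinearMap.range (P : H →ₗ[ℂ] H))) : H),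
            (v : H)⟫ = 0 := by
          rw [← Submodule.coe_inner]
          exact hv _ ⟨⟨Q x, ⟨x, rfl⟩⟩, rfl⟩
        have h2 : ((restrictProj P Q ⟨Q x, ⟨x, rfl⟩⟩ : ↥(LinearMap.range (P : H →ₗ[ℂ] H))) : H)
            = P (Q x) := rfl
        rw [h2] at h1
        calc ⟪x, Q (v : H)⟫ = ⟪Q x, (v : H)⟫ := (hQinner x (v : H)).symm
          _ = ⟪Q x, P (v : H)⟫ := by rw [hPfix _ v.2]
          _ = ⟪P (Q x), (v : H)⟫ := (hPinner (Q x) (v : H)).symm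
          _ = 0 := h1
      have := key (Q (v : H))
      rwa [inner_self_eq_zero] at this
    · rintro ⟨hvP, hvQ⟩ u ⟨w, rfl⟩
      rw [Submodule.coe_inner]
      have h2 : ((restrictProj P Q w : ↥(LinearMap.range (P : H →ₗ[ℂ] H))) : H) = P (w : H) := rfl
      rw [h2]
      calc ⟪P (w : H), (v : H)⟫ = ⟪(w : H), P (v : H)⟫ := hPinner _ _
        _ = ⟪(w : H), (v : H)⟫ := by rw [hPfix _ v.2]
        _ = ⟪Q (w : H), (v : H)⟫ := by rw [hQfix _ w.2]
        _ = ⟪(w : H), Q (v : H)⟫ := hQinner _ _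
        _ = 0 := by rw [show Q (v : H) = 0 from hvQ, inner_zero_right]
  have e2 : ↥((LinearMap.range (restrictProj P Q))ᗮ) ≃ₗ[ℂ]
      ↥(LinearMap.range (P : H →ₗ[ℂ] H) ⊓ LinearMap.ker (Q : H →ₗ[ℂ] H)) :=
    (LinearEquiv.ofEq _ _ horth).trans (Submodule.comapSubtypeEquivOfLe inf_le_left)
  have fin5 : FiniteDimensional ℂ ↥((LinearMap.range (restrictProj P Q))ᗮ) :=
    Module.Finite.equiv e2.symm
  refine ⟨fin1, fin2, conj3, fin4, fin5, ?_⟩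
  have hcomm : LinearMap.ker (P : H →ₗ[ℂ] H) ⊓ LinearMap.range (Q : H →ₗ[ℂ] H)
      = LinearMap.range (Q : H →ₗ[ℂ] H) ⊓ LinearMap.ker (P : H →ₗ[ℂ] H) := inf_comm _ _
  rw [e1.finrank_eq, e2.finrank_eq, hcomm]
end

section
/- Let (λ_n)_{n≥1} be a sequence of nonzero real numbers satisfying |λ_n| ≥ C·n^α for all n, with constants C > 0 and α > 0. Then for every complex s with Re s > 1/α one has the Mellin transform identity (1/Γ((s+1)/2)) · ∫₀^∞ t^{(s−1)/2} · ( Σ_n λ_n·e^{−t·λ_n²} ) dt = Σ_n sign(λ_n)·|λ_n|^{−s}, where both the integral and the series converge absolutely. -/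
open MeasureTheory

open Filter Topology Set Complex ENNReal NNReal in
private lemma my_integrable_tsum {μ : Measure ℝ} {F : ℕ → ℝ → ℂ}
    (hF_int : ∀ i, Integrable (F i) μ)
    (hF_sum : Summable fun i ↦ ∫ a, ‖F i a‖ ∂μ) :
    Integrable (fun a ↦ ∑' i, F i a) μ := by
  have hval (i : ℕ) : (∫⁻ (a : ℝ), ‖F i a‖₊ ∂μ) = ENNReal.ofReal (∫ a : ℝ, ‖F i a‖ ∂μ) :=
    (ofReal_integral_norm_eq_lintegral_enorm (hF_int i)).symm
  have key : ∑' i, ∫⁻ a, ‖F i a‖₊ ∂μ ≠ ⊤ := by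
    rw [funext hval, ← ENNReal.ofReal_tsum_of_nonneg
      (fun i ↦ integral_nonneg fun a ↦ norm_nonneg _) hF_sum]
    exact ENNReal.ofReal_ne_top
  have hmeas : ∀ i, AEMeasurable (fun a ↦ (‖F i a‖₊ : ℝ≥0∞)) μ := fun i ↦ (hF_int i).1.enorm
  have hhh : ∀ᵐ a ∂μ, Summable fun n ↦ (‖F n a‖₊ : ℝ) := by
    rw [← lintegral_tsum hmeas] at key
    refine (ae_lt_top' (AEMeasurable.ennreal_tsum hmeas) key).mono ?_
    intro x hx
    rw [← ENNReal.tsum_coe_ne_top_iff_summable_coe]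
    exact hx.ne
  have hae : ∀ᵐ a ∂μ, Summable fun n ↦ F n a := by
    filter_upwards [hhh] with a ha
    exact Summable.of_norm (by simpa only [coe_nnnorm] using ha)
  have hsm : AEStronglyMeasurable (fun a ↦ ∑' i, F i a) μ := by
    refine aestronglyMeasurable_of_tendsto_ae atTop
      (f := fun n a ↦ ∑ i ∈ Finset.range n, F i a) (fun n ↦ ?_) ?_
    · exact Finset.aestronglyMeasurable_fun_sum _ fun i _ ↦ (hF_int i).1
    · filter_upwards [hae] with a ha
      exact ha.hasSum.tendsto_sum_nat
  refine ⟨hsm, ?_⟩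
  rw [hasFiniteIntegral_def]
  calc ∫⁻ a, ‖∑' i, F i a‖₊ ∂μ
      ≤ ∫⁻ a, ∑' i, (‖F i a‖₊ : ℝ≥0∞) ∂μ := by
        refine lintegral_mono_ae ?_
        filter_upwards [hhh] with a ha
        have hsa : Summable fun i ↦ ‖F i a‖₊ := by
          rwa [← NNReal.summable_coe]
        calc (‖∑' i, F i a‖₊ : ℝ≥0∞)
            ≤ ((∑' i, ‖F i a‖₊ : ℝ≥0) : ℝ≥0∞) := by
              exact_mod_cast nnnorm_tsum_le hsa
          _ = ∑' i, (‖F i a‖₊ : ℝ≥0∞) := ENNReal.coe_tsum hsa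
    _ = ∑' i, ∫⁻ a, ‖F i a‖₊ ∂μ := lintegral_tsum hmeas
    _ < ⊤ := key.lt_top

/-- Mellin transform identity for the eta function: for a sequence `(λ_n)_{n≥1}`
(here `lam n = λ_{n+1}`) of nonzero reals with `|λ_n| ≥ C·n^α`, `C > 0`, `α > 0`,
and `Re s > 1/α`,
`(1/Γ((s+1)/2)) ∫₀^∞ t^{(s−1)/2} (Σ λ_n e^{−tλ_n²}) dt = Σ sign(λ_n)|λ_n|^{−s}`,
where the integral and the series converge absolutely
(`|λ|^{−s} := exp(−s·log|λ|)`). -/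
theorem stmt13 (lam : ℕ → ℝ) (C α : ℝ) (hC : 0 < C) (hα : 0 < α)
    (hne : ∀ n, lam n ≠ 0)
    (hgrowth : ∀ n : ℕ, C * ((n : ℝ) + 1) ^ α ≤ |lam n|)
    (s : ℂ) (hs : 1 / α < s.re) :
    IntegrableOn
      (fun t : ℝ => (t : ℂ) ^ ((s - 1) / 2)
        * ∑' n, (lam n : ℂ) * (Real.exp (-t * (lam n) ^ 2) : ℂ))
      (Set.Ioi (0 : ℝ)) ∧
    Summable (fun n => ‖(Real.sign (lam n) : ℂ) * Complex.exp (-s * Real.log |lam n|)‖) ∧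
    (1 / Complex.Gamma ((s + 1) / 2))
        * ∫ t in Set.Ioi (0 : ℝ), (t : ℂ) ^ ((s - 1) / 2)
            * ∑' n, (lam n : ℂ) * (Real.exp (-t * (lam n) ^ 2) : ℂ)
      = ∑' n, (Real.sign (lam n) : ℂ) * Complex.exp (-s * Real.log |lam n|) := by
  classical
  set s' : ℂ := (s + 1) / 2 with hs'def
  set q : ℝ := s.re with hqdef
  have hα' : (0:ℝ) < 1 / α := by positivity
  have hq0 : 0 < q := lt_trans hα' hs
  have hαq : 1 < α * q := by
    rw [div_lt_iff₀ hα] at hs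
    nlinarith
  have hs're : s'.re = (q + 1) / 2 := by
    rw [hs'def, Complex.div_ofNat_re, Complex.add_re, Complex.one_re]
  have hs'pos : 0 < s'.re := by rw [hs're]; positivity
  have habs : ∀ n, (0:ℝ) < |lam n| := fun n ↦ abs_pos.2 (hne n)
  have hp : ∀ n, (0:ℝ) < lam n ^ 2 := fun n ↦ pow_two_pos_of_ne_zero (hne n)
  have hGamma_ne : Complex.Gamma s' ≠ 0 := Complex.Gamma_ne_zero_of_re_pos hs'pos
  set F : ℕ → ℝ → ℂ := fun i t ↦
    (t : ℂ) ^ (s' - 1) * ((lam i : ℂ) * (Real.exp (-(lam i ^ 2) * t) : ℂ)) with hFdef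
  -- the integrand coincides with `fun t ↦ ∑' i, F i t`
  have hfun : (fun t : ℝ => (t : ℂ) ^ ((s - 1) / 2)
        * ∑' n, (lam n : ℂ) * (Real.exp (-t * (lam n) ^ 2) : ℂ))
      = fun t ↦ ∑' i, F i t := by
    funext t
    rw [hFdef, tsum_mul_left]
    have h1 : (s - 1) / 2 = s' - 1 := by rw [hs'def]; ring
    rw [h1]
    congr 1
    exact tsum_congr fun n ↦ by rw [show -t * lam n ^ 2 = -(lam n ^ 2) * t by ring]
  -- summability of `|lam n| ^ (-q)`
  have hsummain : Summable fun n ↦ |lam n| ^ (-q) := by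
    have h0 : Summable (fun n : ℕ ↦ ((n : ℝ)) ^ (-(α * q))) :=
      Real.summable_nat_rpow.2 (by linarith)
    have h1 : Summable (fun n : ℕ ↦ (((n : ℝ) + 1)) ^ (-(α * q))) := by
      have h2 := (summable_nat_add_iff 1).2 h0
      refine h2.congr fun n ↦ ?_
      push_cast
      ring_nf
    refine Summable.of_nonneg_of_le (fun n ↦ by positivity) (fun n ↦ ?_)
      (h1.mul_left (C ^ (-q)))
    have hb : (0:ℝ) < C * ((n : ℝ) + 1) ^ α := by positivity
    calc |lam n| ^ (-q) ≤ (C * ((n : ℝ) + 1) ^ α) ^ (-q) :=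
          Real.rpow_le_rpow_of_nonpos hb (hgrowth n) (by linarith)
      _ = C ^ (-q) * (((n : ℝ) + 1)) ^ (-(α * q)) := by
          rw [Real.mul_rpow hC.le (by positivity), ← Real.rpow_mul (by positivity)]
          ring_nf
  -- the norm of a series term equals `|lam n| ^ (-q)`
  have hnormeq : ∀ n, ‖(Real.sign (lam n) : ℂ) * Complex.exp (-s * Real.log |lam n|)‖
      = |lam n| ^ (-q) := by
    intro n
    have hsign : |Real.sign (lam n)| = 1 := by
      rcases (hne n).lt_or_gt with h | h
      · rw [Real.sign_of_neg h]; norm_num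
      · rw [Real.sign_of_pos h]; norm_num
    rw [norm_mul, Complex.norm_real, Real.norm_eq_abs, hsign, one_mul,
      Complex.norm_exp]
    have h5 : (-s * (Real.log |lam n| : ℂ)).re = -q * Real.log |lam n| := by
      simp [Complex.mul_re, hqdef]
    rw [h5, Real.rpow_def_of_pos (habs n)]
    ring_nf
  -- per-term integrability
  have hint : ∀ i, IntegrableOn (F i) (Set.Ioi 0) := by
    intro i
    have hpi := hp i
    have hbase := Complex.GammaIntegral_convergent hs'pos
    rw [← mul_zero (lam i ^ 2), ← integrableOn_Ioi_comp_mul_left_iff _ _ hpi] at hbase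
    have h2 : IntegrableOn (fun t : ℝ ↦ (t : ℂ) ^ (s' - 1)
        * (Real.exp (-(lam i ^ 2) * t) : ℂ)) (Set.Ioi 0) := by
      refine IntegrableOn.congr_fun (hbase.const_mul (1 / ((lam i ^ 2 : ℝ) : ℂ) ^ (s' - 1)))
        (fun t (ht : 0 < t) ↦ ?_) measurableSet_Ioi
      have hcne : ((lam i ^ 2 : ℝ) : ℂ) ^ (s' - 1) ≠ 0 := by
        rw [Ne, Complex.cpow_eq_zero_iff, not_and_or]
        exact Or.inl (Complex.ofReal_ne_zero.mpr hpi.ne')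
      rw [Complex.ofReal_mul, Complex.mul_cpow_ofReal_nonneg hpi.le ht.le,
        show -(lam i ^ 2) * t = -(lam i ^ 2 * t) by ring]
      have cancel : ∀ (A E T : ℂ), A ≠ 0 → 1 / A * (E * (A * T)) = T * E := by
        intro A E T hA
        field_simp
      exact cancel _ _ _ hcne
    refine IntegrableOn.congr_fun (h2.const_mul (lam i : ℂ)) (fun t _ ↦ ?_) measurableSet_Ioi
    rw [hFdef]
    ring
  -- per-term norm integral
  have hnormint : ∀ i, (∫ t in Set.Ioi (0:ℝ), ‖F i t‖)
      = Real.Gamma s'.re * (|lam i| ^ (-q)) := by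
    intro i
    have hpi := hp i
    have key := Real.integral_rpow_mul_exp_neg_mul_Ioi hs'pos hpi
    simp_rw [← neg_mul (lam i ^ 2)] at key
    have heq : ∀ t ∈ Set.Ioi (0:ℝ), ‖F i t‖
        = |lam i| * (t ^ (s'.re - 1) * Real.exp (-(lam i ^ 2) * t)) := by
      intro t ht
      rw [hFdef]
      simp only [norm_mul, Complex.norm_real, Real.norm_eq_abs, Real.abs_exp,
        Complex.norm_cpow_eq_rpow_re_of_pos ht, Complex.sub_re,
        Complex.one_re]
      ring
    rw [setIntegral_congr_fun measurableSet_Ioi heq, integral_const_mul, key]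
    have hb2 : (1 / lam i ^ 2 : ℝ) = |lam i| ^ (-2 : ℝ) := by
      rw [Real.rpow_neg (abs_nonneg _), show ((2:ℝ)) = ((2:ℕ):ℝ) by norm_num,
        Real.rpow_natCast, sq_abs, one_div]
    rw [hb2, ← Real.rpow_mul (abs_nonneg _)]
    have h4 : (-2 : ℝ) * s'.re = -q + -1 := by rw [hs're]; ring
    rw [h4, Real.rpow_add (habs i), Real.rpow_neg_one]
    field_simp [(habs i).ne']
  -- summability of norm integrals
  have hFsum : Summable fun i ↦ ∫ t in Set.Ioi (0:ℝ), ‖F i t‖ := by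
    refine (hsummain.mul_left (Real.Gamma s'.re)).congr fun i ↦ ?_
    exact (hnormint i).symm
  -- per-term integral value
  have hvalint : ∀ i, (∫ t in Set.Ioi (0:ℝ), F i t)
      = Complex.Gamma s' * ((Real.sign (lam i) : ℂ)
          * Complex.exp (-s * (Real.log |lam i| : ℂ))) := by
    intro i
    have hpi := hp i
    have key := Complex.integral_cpow_mul_exp_neg_mul_Ioi hs'pos hpi
    set L : ℂ := (Real.log |lam i| : ℂ) with hL
    have hcpow : (1 / ((lam i ^ 2 : ℝ) : ℂ)) ^ s' = Complex.exp (-(s + 1) * L) := by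
      have hlog : Complex.log (1 / ((lam i ^ 2 : ℝ) : ℂ)) = (-(2 * Real.log |lam i|) : ℝ) := by
        rw [show (1 / ((lam i ^ 2 : ℝ) : ℂ)) = (((1 / lam i ^ 2 : ℝ)) : ℂ) by push_cast; ring,
          ← Complex.ofReal_log (by positivity)]
        congr 1
        rw [one_div, Real.log_inv, Real.log_pow, Real.log_abs]
        push_cast
        ring
      rw [Complex.cpow_def_of_ne_zero (by
          simp only [one_div, ne_eq, inv_eq_zero, Complex.ofReal_eq_zero]
          exact hpi.ne'), hlog]
      congr 1
      rw [hs'def]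
      push_cast
      ring
    have hlam : ((lam i : ℝ) : ℂ) = (Real.sign (lam i) : ℂ) * Complex.exp L := by
      have h1 : lam i = Real.sign (lam i) * Real.exp (Real.log |lam i|) := by
        rw [Real.exp_log (habs i)]
        rcases (hne i).lt_or_gt with h | h
        · rw [Real.sign_of_neg h, abs_of_neg h]; ring
        · rw [Real.sign_of_pos h, abs_of_pos h]; ring
      rw [hL, ← Complex.ofReal_exp]
      exact_mod_cast congrArg (fun x : ℝ ↦ (x : ℂ)) h1
    calc (∫ t in Set.Ioi (0:ℝ), F i t)
        = ∫ t in Set.Ioi (0:ℝ),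
            (lam i : ℂ) * ((t : ℂ) ^ (s' - 1)
              * Complex.exp (-(((lam i ^ 2 : ℝ) : ℂ) * (t : ℂ)))) := by
          refine setIntegral_congr_fun measurableSet_Ioi fun t _ ↦ ?_
          simp only [hFdef]
          rw [show -lam i ^ 2 * t = -(lam i ^ 2 * t) by ring, Complex.ofReal_exp,
            Complex.ofReal_neg, Complex.ofReal_mul]
          ring
      _ = (lam i : ℂ) * ((1 / ((lam i ^ 2 : ℝ) : ℂ)) ^ s' * Complex.Gamma s') := by
          rw [integral_const_mul, key]
      _ = Complex.Gamma s' * ((Real.sign (lam i) : ℂ) * (Complex.exp L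
            * Complex.exp (-(s + 1) * L))) := by
          rw [hcpow, hlam]; ring
      _ = _ := by
          rw [← Complex.exp_add, show L + -(s + 1) * L = -s * L by ring]
  refine ⟨?_, ?_, ?_⟩
  · rw [IntegrableOn, hfun]
    exact my_integrable_tsum hint hFsum
  · exact hsummain.congr fun n ↦ (hnormeq n).symm
  · rw [hfun, ← integral_tsum_of_summable_integral_norm hint hFsum, tsum_congr hvalint,
      tsum_mul_left, ← mul_assoc, one_div, inv_mul_cancel₀ hGamma_ne, one_mul]
end

section
/- Let (λ_n)_{n≥1} be a sequence of positive real numbers satisfying λ_n ≥ C·n^α for all n, with constants C > 0 and α > 0. Then for every complex s with Re s > 1/(2α) one has the Mellin transform identity (1/Γ(s)) · ∫₀^∞ t^{s−1} · ( Σ_n e^{−t·λ_n²} ) dt = Σ_n λ_n^{−2s}, where both the integral and the series converge absolutely. -/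
open MeasureTheory

/-- Mellin transform identity for the zeta function: for a sequence `(λ_n)_{n≥1}`
(here `lam n = λ_{n+1}`) of positive reals with `λ_n ≥ C·n^α`, `C > 0`, `α > 0`,
and `Re s > 1/(2α)`,
`(1/Γ(s)) ∫₀^∞ t^{s−1} (Σ e^{−tλ_n²}) dt = Σ λ_n^{−2s}`,
where the integral and the series converge absolutely
(`λ^{−2s} := exp(−2s·log λ)`). -/
theorem stmt14 (lam : ℕ → ℝ) (C α : ℝ) (hC : 0 < C) (hα : 0 < α)
    (hpos : ∀ n, 0 < lam n)
    (hgrowth : ∀ n : ℕ, C * ((n : ℝ) + 1) ^ α ≤ lam n)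
    (s : ℂ) (hs : 1 / (2 * α) < s.re) :
    IntegrableOn
      (fun t : ℝ => (t : ℂ) ^ (s - 1)
        * ∑' n, (Real.exp (-t * (lam n) ^ 2) : ℂ))
      (Set.Ioi (0 : ℝ)) ∧
    Summable (fun n => ‖Complex.exp (-(2 * s) * Real.log (lam n))‖) ∧
    (1 / Complex.Gamma s)
        * ∫ t in Set.Ioi (0 : ℝ), (t : ℂ) ^ (s - 1)
            * ∑' n, (Real.exp (-t * (lam n) ^ 2) : ℂ)
      = ∑' n, Complex.exp (-(2 * s) * Real.log (lam n)) := by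
  classical
  have hσ : 0 < s.re := lt_trans (by positivity) hs
  have hlam2 : ∀ n, 0 < lam n ^ 2 := fun n => pow_pos (hpos n) 2
  have hασ : 1 < 2 * α * s.re := by
    rw [div_lt_iff₀ (by positivity)] at hs
    nlinarith
  -- summability of shifted rpow series
  have hsum_rpow : ∀ q : ℝ, q < -1 → Summable (fun n : ℕ => ((n : ℝ) + 1) ^ q) := by
    intro q hq
    have h := Real.summable_nat_rpow.mpr hq
    have h2 := (summable_nat_add_iff 1).mpr h
    simpa [Nat.cast_add, Nat.cast_one] using h2
  -- rpow arithmetic for lam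
  have key : ∀ (n : ℕ) (q : ℝ), (lam n ^ 2 : ℝ) ^ q = lam n ^ (2 * q) := by
    intro n q
    rw [← Real.rpow_natCast (lam n) 2, ← Real.rpow_mul (hpos n).le]
    norm_num
  -- squared growth
  have hgrow2 : ∀ n : ℕ, C ^ 2 * ((n : ℝ) + 1) ^ (2 * α) ≤ lam n ^ 2 := by
    intro n
    have hx : (0 : ℝ) ≤ (n : ℝ) + 1 := by positivity
    have h1 : (C * ((n : ℝ) + 1) ^ α) ^ 2 ≤ lam n ^ 2 :=
      pow_le_pow_left₀ (by positivity) (hgrowth n) 2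
    calc C ^ 2 * ((n : ℝ) + 1) ^ (2 * α)
        = (C * ((n : ℝ) + 1) ^ α) ^ 2 := by
          rw [show (2 * α) = α * 2 by ring, Real.rpow_mul hx, mul_pow]
          rw [show ((((n : ℝ) + 1) ^ α) ^ (2 : ℝ)) = (((n : ℝ) + 1) ^ α) ^ (2 : ℕ) by
            rw [← Real.rpow_natCast (((n : ℝ) + 1) ^ α) 2]; norm_num]
      _ ≤ lam n ^ 2 := h1
  -- pointwise summability of the exponential series
  have hBsum : ∀ t : ℝ, 0 < t → Summable (fun n : ℕ => Real.exp (-t * lam n ^ 2)) := by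
    intro t ht
    set k : ℕ := ⌈1 / α⌉₊ with hk
    have hk1 : 1 / α ≤ (k : ℝ) := Nat.le_ceil _
    have hkα : 1 ≤ (k : ℝ) * α := by
      rw [div_le_iff₀ hα] at hk1; linarith
    have hq : -(2 * α * (k : ℝ)) < -1 := by nlinarith
    refine Summable.of_nonneg_of_le (fun n => (Real.exp_pos _).le) (fun n => ?_)
      (((hsum_rpow _ hq)).mul_left ((k.factorial : ℝ) * ((t * C ^ 2)⁻¹) ^ k))
    have hx : (0 : ℝ) ≤ (n : ℝ) + 1 := by positivity
    set y : ℝ := t * C ^ 2 * ((n : ℝ) + 1) ^ (2 * α) with hy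
    have hy0 : 0 < y := by positivity
    have hyx : y ≤ t * lam n ^ 2 := by
      calc y = t * (C ^ 2 * ((n : ℝ) + 1) ^ (2 * α)) := by ring
        _ ≤ t * lam n ^ 2 := mul_le_mul_of_nonneg_left (hgrow2 n) ht.le
    have hexp : y ^ k / (k.factorial : ℝ) ≤ Real.exp (t * lam n ^ 2) := by
      refine le_trans ?_ (Real.pow_div_factorial_le_exp _ (by positivity) k)
      gcongr
    have h2 : Real.exp (-t * lam n ^ 2) ≤ (k.factorial : ℝ) / y ^ k := by
      rw [show -t * lam n ^ 2 = -(t * lam n ^ 2) by ring, Real.exp_neg, ← inv_div]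
      exact inv_anti₀ (by positivity) hexp
    have hyk : y ^ k = (t * C ^ 2) ^ k * ((n : ℝ) + 1) ^ (2 * α * (k : ℝ)) := by
      rw [hy, mul_pow, ← Real.rpow_natCast (((n : ℝ) + 1) ^ (2 * α)) k,
        ← Real.rpow_mul hx]
    calc Real.exp (-t * lam n ^ 2) ≤ (k.factorial : ℝ) / y ^ k := h2
      _ = (k.factorial : ℝ) * ((t * C ^ 2)⁻¹) ^ k * ((n : ℝ) + 1) ^ (-(2 * α * (k : ℝ))) := by
          rw [hyk, div_eq_mul_inv, mul_inv, Real.rpow_neg hx, inv_pow]; ring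
  -- summability of the Dirichlet series (real form)
  have hsumlam : Summable (fun n : ℕ => lam n ^ (-(2 * s.re))) := by
    refine Summable.of_nonneg_of_le (fun n => Real.rpow_nonneg (hpos n).le _) (fun n => ?_)
      ((hsum_rpow (α * -(2 * s.re)) (by nlinarith)).mul_left (C ^ (-(2 * s.re))))
    have hx : (0 : ℝ) ≤ (n : ℝ) + 1 := by positivity
    have h1 : lam n ^ (-(2 * s.re)) ≤ (C * ((n : ℝ) + 1) ^ α) ^ (-(2 * s.re)) :=
      Real.rpow_le_rpow_of_nonpos (by positivity) (hgrowth n) (by linarith)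
    calc lam n ^ (-(2 * s.re)) ≤ (C * ((n : ℝ) + 1) ^ α) ^ (-(2 * s.re)) := h1
      _ = C ^ (-(2 * s.re)) * ((n : ℝ) + 1) ^ (α * -(2 * s.re)) := by
          rw [Real.mul_rpow hC.le (Real.rpow_nonneg hx _), ← Real.rpow_mul hx]
  -- norm of the summands of the Dirichlet series
  have hnorm_eq : ∀ n : ℕ,
      ‖Complex.exp (-(2 * s) * (Real.log (lam n) : ℂ))‖ = lam n ^ (-(2 * s.re)) := by
    intro n
    rw [Complex.norm_exp, Real.rpow_def_of_pos (hpos n)]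
    congr 1
    simp [Complex.mul_re]
    ring
  -- apply hasSum_mellin
  have hF : ∀ t ∈ Set.Ioi (0 : ℝ),
      HasSum (fun n : ℕ => (1 : ℂ) * Real.exp (-(lam n ^ 2) * t))
        (∑' n, (Real.exp (-t * lam n ^ 2) : ℂ)) := by
    intro t ht
    have h := (Complex.summable_ofReal.mpr (hBsum t ht)).hasSum
    have e : (fun n : ℕ => (1 : ℂ) * Real.exp (-(lam n ^ 2) * t))
        = fun n : ℕ => (Real.exp (-t * lam n ^ 2) : ℂ) := by
      funext n
      rw [one_mul]
      norm_cast
      ring_nf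
    rw [e]
    exact h
  have h_sum : Summable (fun n : ℕ => ‖(1 : ℂ)‖ / (lam n ^ 2 : ℝ) ^ s.re) := by
    have e : (fun n : ℕ => ‖(1 : ℂ)‖ / (lam n ^ 2 : ℝ) ^ s.re)
        = fun n : ℕ => lam n ^ (-(2 * s.re)) := by
      funext n
      rw [norm_one, key n s.re, one_div, ← Real.rpow_neg (hpos n).le]
    rw [e]; exact hsumlam
  have hmain := hasSum_mellin (a := fun _ : ℕ => (1 : ℂ)) (p := fun n => lam n ^ 2)
    (F := fun t => ∑' n, (Real.exp (-t * lam n ^ 2) : ℂ))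
    (fun n => Or.inr (hlam2 n)) hσ hF h_sum
  -- termwise identity
  have hGamma : Complex.Gamma s ≠ 0 := Complex.Gamma_ne_zero_of_re_pos hσ
  have hterm : ∀ n : ℕ,
      (1 / Complex.Gamma s) * (Complex.Gamma s * 1 / ((lam n ^ 2 : ℝ) : ℂ) ^ s)
        = Complex.exp (-(2 * s) * (Real.log (lam n) : ℂ)) := by
    intro n
    have hb : ((lam n ^ 2 : ℝ) : ℂ) ≠ 0 := by
      exact_mod_cast (hlam2 n).ne'
    have hbs : ((lam n ^ 2 : ℝ) : ℂ) ^ s ≠ 0 := by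
      rw [Ne, Complex.cpow_eq_zero_iff, not_and_or]
      exact Or.inl hb
    have hlog : Complex.log ((lam n ^ 2 : ℝ) : ℂ) = ((2 * Real.log (lam n) : ℝ) : ℂ) := by
      rw [← Complex.ofReal_log (hlam2 n).le, Real.log_pow]
      push_cast; ring
    have hx : ((lam n ^ 2 : ℝ) : ℂ) ^ (-s) = Complex.exp (-(2 * s) * (Real.log (lam n) : ℂ)) := by
      rw [Complex.cpow_def_of_ne_zero hb, hlog]
      push_cast
      ring_nf
    rw [← hx, Complex.cpow_neg]
    field_simp
  -- the three goals
  set F' : ℕ → ℝ → ℂ := fun n t => (t : ℂ) ^ (s - 1) * (Real.exp (-t * lam n ^ 2) : ℂ) with hF'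
  have hGeq : (fun t : ℝ => (t : ℂ) ^ (s - 1) * ∑' n, (Real.exp (-t * lam n ^ 2) : ℂ))
      = fun t => ∑' n, F' n t := by
    funext t
    exact tsum_mul_left.symm
  have hFint : ∀ n, IntegrableOn (F' n) (Set.Ioi 0) := by
    intro n
    have h0 := Complex.GammaIntegral_convergent hσ
    rw [← mul_zero (lam n ^ 2), ← integrableOn_Ioi_comp_mul_left_iff _ _ (hlam2 n)] at h0
    refine IntegrableOn.congr_fun (h0.const_mul (1 / ((lam n ^ 2 : ℝ) : ℂ) ^ (s - 1)))
      (fun t (ht : 0 < t) => ?_) measurableSet_Ioi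
    have hbs : ((lam n ^ 2 : ℝ) : ℂ) ^ (s - 1) ≠ 0 := by
      rw [Ne, Complex.cpow_eq_zero_iff, not_and_or]
      exact Or.inl (by exact_mod_cast (hlam2 n).ne')
    show 1 / ((lam n ^ 2 : ℝ) : ℂ) ^ (s - 1)
        * ((Real.exp (-(lam n ^ 2 * t)) : ℂ) * ((lam n ^ 2 * t : ℝ) : ℂ) ^ (s - 1)) = F' n t
    rw [Complex.ofReal_mul, Complex.mul_cpow_ofReal_nonneg (hlam2 n).le ht.le,
      show (-(lam n ^ 2 * t)) = -t * lam n ^ 2 by ring, hF']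
    rw [show (1 : ℂ) / ((lam n ^ 2 : ℝ) : ℂ) ^ (s - 1)
        * ((Real.exp (-t * lam n ^ 2) : ℂ)
          * (((lam n ^ 2 : ℝ) : ℂ) ^ (s - 1) * ((t : ℝ) : ℂ) ^ (s - 1)))
        = ((t : ℝ) : ℂ) ^ (s - 1) * (Real.exp (-t * lam n ^ 2) : ℂ)
          * (((lam n ^ 2 : ℝ) : ℂ) ^ (s - 1) * (((lam n ^ 2 : ℝ) : ℂ) ^ (s - 1))⁻¹) from by ring,
      mul_inv_cancel₀ hbs, mul_one]
  have hnormint : ∀ n, (∫ t in Set.Ioi (0 : ℝ), ‖F' n t‖)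
      = (1 / lam n ^ 2) ^ s.re * Real.Gamma s.re := by
    intro n
    rw [← Real.integral_rpow_mul_exp_neg_mul_Ioi hσ (hlam2 n)]
    refine setIntegral_congr_fun measurableSet_Ioi (fun t ht => ?_)
    rw [hF']
    simp only [norm_mul, Complex.norm_real, Real.norm_eq_abs,
      Complex.norm_cpow_eq_rpow_re_of_pos ht, Complex.sub_re, Complex.one_re,
      abs_of_pos (Real.exp_pos _)]
    rw [show (-(lam n ^ 2 * t)) = -t * lam n ^ 2 by ring]
  have hSnorm : Summable (fun n => ∫ t in Set.Ioi (0 : ℝ), ‖F' n t‖) := by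
    simp_rw [hnormint]
    apply Summable.mul_right
    have e : (fun n : ℕ => (1 / lam n ^ 2 : ℝ) ^ s.re) = fun n => lam n ^ (-(2 * s.re)) := by
      funext n
      rw [one_div, Real.inv_rpow (hlam2 n).le, key n s.re, ← Real.rpow_neg (hpos n).le]
    rw [e]; exact hsumlam
  refine ⟨?_, ?_, ?_⟩
  · -- integrability
    rw [hGeq]
    constructor
    · refine aestronglyMeasurable_of_tendsto_ae (u := Filter.atTop)
        (f := fun N t => ∑ n ∈ Finset.range N, F' n t) (fun N => ?_) ?_
      · exact Finset.aestronglyMeasurable_fun_sum _ fun n _ => (hFint n).aestronglyMeasurable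
      · filter_upwards [ae_restrict_mem measurableSet_Ioi] with t ht
        have hsumm : Summable fun n => F' n t :=
          (Complex.summable_ofReal.mpr (hBsum t ht)).mul_left ((t : ℂ) ^ (s - 1))
        exact hsumm.hasSum.tendsto_sum_nat
    · rw [hasFiniteIntegral_def]
      have hb : ∀ᵐ t ∂(volume.restrict (Set.Ioi (0 : ℝ))),
          (‖∑' n, F' n t‖₊ : ENNReal) ≤ ∑' n, (‖F' n t‖₊ : ENNReal) := by
        filter_upwards [ae_restrict_mem measurableSet_Ioi] with t ht
        have hs2 : Summable fun n => ‖F' n t‖₊ := by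
          rw [← NNReal.summable_coe]
          exact ((Complex.summable_ofReal.mpr (hBsum t ht)).mul_left ((t : ℂ) ^ (s - 1))).norm
        calc (‖∑' n, F' n t‖₊ : ENNReal)
            ≤ ((∑' n, ‖F' n t‖₊ : NNReal) : ENNReal) := ENNReal.coe_le_coe.mpr (nnnorm_tsum_le hs2)
          _ = ∑' n, (‖F' n t‖₊ : ENNReal) := ENNReal.coe_tsum hs2
      refine lt_of_le_of_lt (lintegral_mono_ae hb) ?_
      rw [lintegral_tsum (f := fun n t => (‖F' n t‖₊ : ENNReal)) fun n => (hFint n).aestronglyMeasurable.enorm]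
      have e : ∀ n, (∫⁻ t in Set.Ioi (0 : ℝ), ‖F' n t‖₊)
          = ENNReal.ofReal (∫ t in Set.Ioi (0 : ℝ), ‖F' n t‖) := fun n =>
        (ofReal_integral_norm_eq_lintegral_enorm (hFint n)).symm
      simp_rw [e]
      rw [← ENNReal.ofReal_tsum_of_nonneg
        (fun n => integral_nonneg fun t => norm_nonneg _) hSnorm]
      exact ENNReal.ofReal_lt_top
  · -- summability of the Dirichlet series
    have e : (fun n : ℕ => ‖Complex.exp (-(2 * s) * (Real.log (lam n) : ℂ))‖)
        = fun n => lam n ^ (-(2 * s.re)) := funext hnorm_eq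
    rw [e]; exact hsumlam
  · -- the identity
    have hm : mellin (fun t => ∑' n, (Real.exp (-t * lam n ^ 2) : ℂ)) s
        = ∫ t in Set.Ioi (0 : ℝ), (t : ℂ) ^ (s - 1)
            * ∑' n, (Real.exp (-t * lam n ^ 2) : ℂ) := by
      simp_rw [mellin, smul_eq_mul]
    rw [← hm, ← hmain.tsum_eq, ← tsum_mul_left]
    exact tsum_congr hterm
end

section
/- Let V be a finite-dimensional complex inner product space and J : V → V a unitary operator with J* = −J. Then there exists a subspace L ⊆ V with L^⊥ = J(L) (a Lagrangian subspace) if and only if dim ker(J − i·I) = dim ker(J + i·I). -/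
open LinearMap Submodule Complex

section
variable {V : Type*} [NormedAddCommGroup V] [InnerProductSpace ℂ V] [FiniteDimensional ℂ V]

-- basic facts
theorem aux_basic (J : V →ₗ[ℂ] V)
    (hJ1 : (LinearMap.adjoint J) ∘ₗ J = LinearMap.id)
    (hJskew : LinearMap.adjoint J = -J) :
    (∀ v, J (J v) = -v) ∧ (∀ x y : V, (inner ℂ (J x) (J y) : ℂ) = inner ℂ x y) := by
  constructor
  · intro v
    have h := congrArg (fun f => f v) hJ1
    rw [hJskew] at h
    simp only [LinearMap.comp_apply, LinearMap.neg_apply, LinearMap.id_apply] at h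
    linear_combination (norm := module) -h
  · intro x y
    rw [← LinearMap.adjoint_inner_left]
    have h := congrArg (fun f => f x) hJ1
    simp only [LinearMap.comp_apply, LinearMap.id_apply] at h
    rw [h]

-- eigenspace membership
theorem mem_Vp (J : V →ₗ[ℂ] V) (v : V) :
    v ∈ LinearMap.ker (J - Complex.I • (LinearMap.id : V →ₗ[ℂ] V)) ↔ J v = Complex.I • v := by
  simp [LinearMap.mem_ker, sub_eq_zero]

theorem mem_Vm (J : V →ₗ[ℂ] V) (v : V) :
    v ∈ LinearMap.ker (J + Complex.I • (LinearMap.id : V →ₗ[ℂ] V)) ↔ J v = -(Complex.I • v) := by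
  simp [LinearMap.mem_ker, add_eq_zero_iff_eq_neg]

end

section
set_option linter.unusedSectionVars false
variable {V : Type*} [NormedAddCommGroup V] [InnerProductSpace ℂ V] [FiniteDimensional ℂ V]

-- orthogonality of eigenspaces
theorem aux_orth (J : V →ₗ[ℂ] V)
    (hinner : ∀ x y : V, (inner ℂ (J x) (J y) : ℂ) = inner ℂ x y)
    {x y : V} (hx : J x = Complex.I • x) (hy : J y = -(Complex.I • y)) :
    (inner ℂ x y : ℂ) = 0 := by
  have h := hinner x y
  rw [hx, hy, inner_smul_left, inner_neg_right, inner_smul_right] at h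
  have : (starRingEnd ℂ Complex.I * -(Complex.I * inner ℂ x y) : ℂ) = inner ℂ x y := h
  rw [Complex.conj_I] at this
  linear_combination -this / 2 + (inner ℂ x y : ℂ) / 2 * Complex.I_sq

end

section
set_option linter.unusedSectionVars false
variable {V : Type*} [NormedAddCommGroup V] [InnerProductSpace ℂ V] [FiniteDimensional ℂ V]

theorem aux_memp (J : V →ₗ[ℂ] V) (hJJ : ∀ v, J (J v) = -v) (v : V) :
    ((1:ℂ)/2) • (v - Complex.I • J v) ∈ LinearMap.ker (J - Complex.I • (LinearMap.id : V →ₗ[ℂ] V)) := by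
  rw [mem_Vp, map_smul, map_sub, map_smul, hJJ]
  match_scalars <;> simp [div_eq_iff, Complex.I_mul_I] <;> ring_nf <;>
    simp [pow_two, Complex.I_mul_I] <;> ring

theorem aux_memm (J : V →ₗ[ℂ] V) (hJJ : ∀ v, J (J v) = -v) (v : V) :
    ((1:ℂ)/2) • (v + Complex.I • J v) ∈ LinearMap.ker (J + Complex.I • (LinearMap.id : V →ₗ[ℂ] V)) := by
  rw [mem_Vm, map_smul, map_add, map_smul, hJJ]
  match_scalars <;> simp [div_eq_iff, Complex.I_mul_I] <;> ring_nf <;>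
    simp [pow_two, Complex.I_mul_I] <;> ring
end

section
set_option linter.unusedSectionVars false
variable {V : Type*} [NormedAddCommGroup V] [InnerProductSpace ℂ V] [FiniteDimensional ℂ V]

theorem aux_dimsum (J : V →ₗ[ℂ] V) (hJJ : ∀ v, J (J v) = -v) :
    Module.finrank ℂ ↥(LinearMap.ker (J - Complex.I • (LinearMap.id : V →ₗ[ℂ] V)))
      + Module.finrank ℂ ↥(LinearMap.ker (J + Complex.I • (LinearMap.id : V →ₗ[ℂ] V)))
      = Module.finrank ℂ V := by
  set Vp := LinearMap.ker (J - Complex.I • (LinearMap.id : V →ₗ[ℂ] V)) with hVp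
  set Vm := LinearMap.ker (J + Complex.I • (LinearMap.id : V →ₗ[ℂ] V)) with hVm
  have hsup : Vp ⊔ Vm = ⊤ := by
    rw [eq_top_iff]
    intro v _
    have hv : v = ((1:ℂ)/2) • (v - Complex.I • J v) + ((1:ℂ)/2) • (v + Complex.I • J v) := by
      match_scalars <;> norm_num
    rw [hv]
    exact Submodule.add_mem_sup (aux_memp J hJJ v) (aux_memm J hJJ v)
  have hinf : Vp ⊓ Vm = ⊥ := by
    rw [eq_bot_iff]
    intro v hvmem
    obtain ⟨h1, h2⟩ := Submodule.mem_inf.mp hvmem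
    rw [hVp, mem_Vp J] at h1
    rw [hVm, mem_Vm J] at h2
    have : Complex.I • v = -(Complex.I • v) := h1.symm.trans h2
    have hv0 : v = 0 := by
      have h3 : (2 * Complex.I) • v = 0 := by
        have h4 : Complex.I • v + Complex.I • v = 0 := by
          nth_rewrite 1 [this]; simp
        linear_combination (norm := module) h4
      have := smul_eq_zero.mp h3
      simpa [Complex.I_ne_zero] using this
    simp [hv0]
  have := Submodule.finrank_sup_add_finrank_inf_eq Vp Vm
  rw [hsup, hinf] at this
  simp only [finrank_top, finrank_bot, add_zero] at this
  omega
end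

section
set_option linter.unusedSectionVars false
variable {V : Type*} [NormedAddCommGroup V] [InnerProductSpace ℂ V] [FiniteDimensional ℂ V]

theorem aux_exists (J : V →ₗ[ℂ] V) (hJJ : ∀ v, J (J v) = -v)
    (hinner : ∀ x y : V, (inner ℂ (J x) (J y) : ℂ) = inner ℂ x y)
    (hdim : Module.finrank ℂ ↥(LinearMap.ker (J - Complex.I • (LinearMap.id : V →ₗ[ℂ] V)))
        = Module.finrank ℂ ↥(LinearMap.ker (J + Complex.I • (LinearMap.id : V →ₗ[ℂ] V)))) :
    ∃ L : Submodule ℂ V, Lᗮ = L.map J := by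
  set Vp := LinearMap.ker (J - Complex.I • (LinearMap.id : V →ₗ[ℂ] V)) with hVp
  set Vm := LinearMap.ker (J + Complex.I • (LinearMap.id : V →ₗ[ℂ] V)) with hVm
  have hJinj : Function.Injective J := by
    intro a b hab
    have := congrArg J hab
    rw [hJJ, hJJ, neg_inj] at this
    exact this
  -- the isometry between the eigenspaces
  let f : Vp ≃ₗᵢ[ℂ] Vm :=
    (stdOrthonormalBasis ℂ Vp).repr.trans
      ((LinearIsometryEquiv.piLpCongrLeft 2 ℂ ℂ (finCongr hdim)).trans
        (stdOrthonormalBasis ℂ Vm).repr.symm)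
  let g : Vp →ₗ[ℂ] V := Vp.subtype + (Vm.subtype ∘ₗ (f.toLinearEquiv : Vp →ₗ[ℂ] Vm))
  have hg : ∀ x : Vp, g x = (x : V) + ((f x : Vm) : V) := fun x => rfl
  -- key orthogonality facts
  have horth : ∀ (x : Vp) (y : Vm), (inner ℂ (x : V) (y : V) : ℂ) = 0 := by
    intro x y
    exact aux_orth J hinner ((mem_Vp J _).mp x.2) ((mem_Vm J _).mp y.2)
  have ginj : Function.Injective g := by
    rw [← LinearMap.ker_eq_bot, eq_bot_iff]
    intro x hx
    rw [LinearMap.mem_ker, hg] at hx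
    have h0 : (inner ℂ (x : V) ((x : V) + ((f x : Vm) : V)) : ℂ) = 0 := by rw [hx, inner_zero_right]
    rw [inner_add_right, horth x (f x), add_zero] at h0
    have : (x : V) = 0 := by rwa [inner_self_eq_zero] at h0
    simpa using Subtype.ext this
  set L := LinearMap.range g with hL
  have hrankL : Module.finrank ℂ L = Module.finrank ℂ Vp :=
    LinearMap.finrank_range_of_inj ginj
  -- J(L) ⊆ Lᗮ
  have hle : L.map J ≤ Lᗮ := by
    rintro w ⟨u, ⟨y, rfl⟩, rfl⟩
    rw [Submodule.mem_orthogonal]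
    rintro u' ⟨x, rfl⟩
    rw [hg, hg, map_add]
    have hy1 : J (y : V) = Complex.I • (y : V) := (mem_Vp J _).mp y.2
    have hy2 : J ((f y : Vm) : V) = -(Complex.I • ((f y : Vm) : V)) := (mem_Vm J _).mp (f y).2
    rw [hy1, hy2, inner_add_left, inner_add_right, inner_add_right,
      inner_smul_right, inner_neg_right, inner_smul_right, inner_neg_right,
      inner_smul_right, inner_smul_right]
    have c1 : (inner ℂ ((x:V)) (((f y : Vm) : V)) : ℂ) = 0 := horth x (f y)
    have c2 : (inner ℂ (((f x : Vm) : V)) ((y:V)) : ℂ) = 0 := by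
      rw [← inner_conj_symm, horth y (f x), map_zero]
    have c3 : (inner ℂ (((f x : Vm) : V)) (((f y : Vm) : V)) : ℂ) = inner ℂ (x:V) (y:V) := by
      have h1 : (inner ℂ (((f x : Vm) : V)) (((f y : Vm) : V)) : ℂ) = inner ℂ (f x) (f y) := rfl
      have h2 : (inner ℂ (f x) (f y) : ℂ) = inner ℂ x y := f.inner_map_map x y
      have h3 : (inner ℂ x y : ℂ) = inner ℂ (x:V) (y:V) := rfl
      rw [h1, h2, h3]
    rw [c1, c2, c3]
    ring
  -- dimension count
  have hdimV := aux_dimsum J hJJ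
  rw [← hVp, ← hVm, ← hdim] at hdimV
  have horthrank : Module.finrank ℂ Lᗮ = Module.finrank ℂ Vp := by
    have := Submodule.finrank_add_finrank_orthogonal (K := L)
    omega
  have hmaprank : Module.finrank ℂ (L.map J) = Module.finrank ℂ Vp := by
    rw [← hrankL]
    exact (Submodule.equivMapOfInjective J hJinj L).finrank_eq.symm
  exact ⟨L, (Submodule.eq_of_le_of_finrank_eq hle (hmaprank.trans horthrank.symm)).symm⟩
end

section
set_option linter.unusedSectionVars false
variable {V : Type*} [NormedAddCommGroup V] [InnerProductSpace ℂ V] [FiniteDimensional ℂ V]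

theorem aux_forward (J : V →ₗ[ℂ] V) (hJJ : ∀ v, J (J v) = -v)
    (L : Submodule ℂ V) (hLag : Lᗮ = L.map J) :
    Module.finrank ℂ ↥(LinearMap.ker (J - Complex.I • (LinearMap.id : V →ₗ[ℂ] V)))
        = Module.finrank ℂ ↥(LinearMap.ker (J + Complex.I • (LinearMap.id : V →ₗ[ℂ] V))) := by
  set Vp := LinearMap.ker (J - Complex.I • (LinearMap.id : V →ₗ[ℂ] V)) with hVp
  set Vm := LinearMap.ker (J + Complex.I • (LinearMap.id : V →ₗ[ℂ] V)) with hVm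
  have hJinj : Function.Injective J := by
    intro a b hab
    have := congrArg J hab
    rwa [hJJ, hJJ, neg_inj] at this
  -- a vector of L that is J-eigen lands in Lᗮ, hence vanishes
  have key : ∀ x : V, x ∈ L → J x ∈ Lᗮ → (∃ c : ℂ, c ≠ 0 ∧ J x = c • x) → x = 0 := by
    rintro x hxL hxO ⟨c, hc, hcx⟩
    have h0 : (inner ℂ x (J x) : ℂ) = 0 := (Submodule.mem_orthogonal L (J x)).mp hxO x hxL
    rw [hcx, inner_smul_right] at h0
    rcases mul_eq_zero.mp h0 with h | h
    · exact absurd h hc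
    · rwa [inner_self_eq_zero] at h
  have hJx : ∀ x ∈ L, J x ∈ Lᗮ := fun x hx => hLag ▸ Submodule.mem_map_of_mem hx
  -- projections
  let P : V →ₗ[ℂ] V := ((1:ℂ)/2) • (LinearMap.id - Complex.I • J)
  let Q : V →ₗ[ℂ] V := ((1:ℂ)/2) • (LinearMap.id + Complex.I • J)
  have hP : ∀ v, P v = ((1:ℂ)/2) • (v - Complex.I • J v) := fun v => rfl
  have hQ : ∀ v, Q v = ((1:ℂ)/2) • (v + Complex.I • J v) := fun v => rfl
  have hPmem : ∀ v, P v ∈ Vp := fun v => aux_memp J hJJ v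
  have hQmem : ∀ v, Q v ∈ Vm := fun v => aux_memm J hJJ v
  let φ : L →ₗ[ℂ] Vp := (P ∘ₗ L.subtype).codRestrict Vp (fun x => hPmem x)
  let ψ : L →ₗ[ℂ] Vm := (Q ∘ₗ L.subtype).codRestrict Vm (fun x => hQmem x)
  have hφinj : Function.Injective φ := by
    rw [← LinearMap.ker_eq_bot, eq_bot_iff]
    intro x hx
    have h1 : P (x : V) = 0 := congrArg Subtype.val (LinearMap.mem_ker.mp hx)
    rw [hP] at h1
    have h2 : (x : V) = Complex.I • J (x : V) := by
      have := smul_eq_zero.mp h1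
      rcases this with h | h
      · norm_num at h
      · rw [sub_eq_zero] at h; exact h
    have h3 : J (x : V) = -(Complex.I • (x : V)) := by
      have h4 := congrArg J h2
      rw [map_smul, hJJ] at h4
      rw [h4]
      match_scalars <;> simp [Complex.I_mul_I] <;> ring_nf <;>
        simp [pow_two, Complex.I_mul_I]
    have h0 : (x : V) = 0 := key (x : V) x.2 (hJx _ x.2) ⟨-Complex.I, by simp [Complex.I_ne_zero], by rw [h3]; module⟩
    simpa using Subtype.ext h0
  have hψinj : Function.Injective ψ := by
    rw [← LinearMap.ker_eq_bot, eq_bot_iff]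
    intro x hx
    have h1 : Q (x : V) = 0 := congrArg Subtype.val (LinearMap.mem_ker.mp hx)
    rw [hQ] at h1
    have h2 : (x : V) = -(Complex.I • J (x : V)) := by
      have := smul_eq_zero.mp h1
      rcases this with h | h
      · norm_num at h
      · rw [add_eq_zero_iff_eq_neg] at h; exact h
    have h3 : J (x : V) = Complex.I • (x : V) := by
      have h4 := congrArg J h2
      rw [map_neg, map_smul, hJJ] at h4
      rw [h4]
      match_scalars <;> simp [Complex.I_mul_I] <;> ring_nf <;>
        simp [pow_two, Complex.I_mul_I]
    have h0 : (x : V) = 0 := key (x : V) x.2 (hJx _ x.2) ⟨Complex.I, Complex.I_ne_zero, h3⟩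
    simpa using Subtype.ext h0
  have hle1 : Module.finrank ℂ L ≤ Module.finrank ℂ Vp :=
    LinearMap.finrank_le_finrank_of_injective hφinj
  have hle2 : Module.finrank ℂ L ≤ Module.finrank ℂ Vm :=
    LinearMap.finrank_le_finrank_of_injective hψinj
  have hdimV := aux_dimsum J hJJ
  rw [← hVp, ← hVm] at hdimV
  have h1 := Submodule.finrank_add_finrank_orthogonal (K := L)
  have h2 : Module.finrank ℂ Lᗮ = Module.finrank ℂ L := by
    rw [hLag]
    exact (Submodule.equivMapOfInjective J hJinj L).finrank_eq.symm
  omega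
end


/-- Let `V` be a finite-dimensional complex inner product space and `J : V → V`
unitary with `J* = −J`. Then a Lagrangian subspace (`Lᗮ = J(L)`) exists iff
`dim ker(J − i·I) = dim ker(J + i·I)`. -/
theorem stmt17 {V : Type*} [NormedAddCommGroup V] [InnerProductSpace ℂ V]
    [FiniteDimensional ℂ V]
    (J : V →ₗ[ℂ] V)
    (hJunitary : (LinearMap.adjoint J) ∘ₗ J = LinearMap.id ∧
      J ∘ₗ (LinearMap.adjoint J) = LinearMap.id)
    (hJskew : LinearMap.adjoint J = -J) :
    (∃ L : Submodule ℂ V, Lᗮ = L.map J) ↔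
      Module.finrank ℂ ↥(LinearMap.ker (J - Complex.I • (LinearMap.id : V →ₗ[ℂ] V)))
        = Module.finrank ℂ ↥(LinearMap.ker (J + Complex.I • (LinearMap.id : V →ₗ[ℂ] V))) := by
  obtain ⟨hJJ, hinner⟩ := aux_basic J hJunitary.1 hJskew
  constructor
  · rintro ⟨L, hL⟩
    exact aux_forward J hJJ L hL
  · intro hdim
    exact aux_exists J hJJ hinner hdim
end
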